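/- arXiv:1309.2336 — 6 statements merged into one kernel-verified Lean document; each statement's English description precedes it below -/
import Mathlib

section
/- Let $\{g_k\}$ be a sequence of measurable functions on a measure space with $\|g_k\|_{L^{1,\infty}} \leq 1$ for all $k$, and let $\{c_k\}$ be positive constants with $\sum_k c_k = 1$. Then the function $G := (\sum_k |c_k g_k|^2)^{1/2}$ satisfies $\|G\|_{L^{1,\infty}} \leq C$ for an absolute constant $C$ (independent of the sequence). Equivalently, by scaling, $\|(\sum_k |g_k|^2)^{1/2}\|_{L^{1,\infty}} \leq C \sum_k \|g_k\|_{L^{1,\infty}}$. -/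
open MeasureTheory ENNReal Set

/-- Key truncated second-moment estimate from a weak-(1,1) bound. -/
lemma trunc_sq_lintegral_le {X : Type} [MeasurableSpace X] (μ : Measure X)
    (f : X → ℝ) (hf : Measurable f) (B : ℝ≥0∞)
    (hB : ∀ t : ℝ, 0 < t → ENNReal.ofReal t * μ {x | t < |f x|} ≤ B)
    (l : ℝ) (hl : 0 < l) :
    ∫⁻ x, ENNReal.ofReal ((min |f x| l) ^ 2) ∂μ ≤ 2 * ENNReal.ofReal l * B := by
  have h_nn : (0:X → ℝ) ≤ᵐ[μ] fun x => min |f x| l :=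
    Filter.Eventually.of_forall fun x => le_min (abs_nonneg _) hl.le
  have h_mble : AEMeasurable (fun x => min |f x| l) μ := (hf.abs.min measurable_const).aemeasurable
  have key := lintegral_rpow_eq_lintegral_meas_lt_mul μ h_nn h_mble (p := 2) (by norm_num)
  have hpow : ∀ x : X, (min |f x| l) ^ (2:ℝ) = (min |f x| l) ^ (2:ℕ) := by
    intro x
    rw [← Real.rpow_natCast (min |f x| l) 2]
    norm_num
  simp_rw [hpow, show (2:ℝ)-1 = 1 by norm_num, Real.rpow_one] at key
  rw [key]
  have hbound : ∫⁻ t in Ioi (0:ℝ), μ {a | t < min |f a| l} * ENNReal.ofReal t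
      ≤ B * ENNReal.ofReal l := by
    have hle : ∀ t ∈ Ioi (0:ℝ), μ {a | t < min |f a| l} * ENNReal.ofReal t
        ≤ (Ioo (0:ℝ) l).indicator (fun _ => B) t := by
      intro t ht
      rcases lt_or_ge t l with h | h
      · rw [indicator_of_mem (show t ∈ Ioo (0:ℝ) l from ⟨ht, h⟩)]
        calc μ {a | t < min |f a| l} * ENNReal.ofReal t
            ≤ μ {x | t < |f x|} * ENNReal.ofReal t :=
              mul_le_mul_left (measure_mono (show {a | t < min |f a| l} ⊆ {x | t < |f x|}
                by intro a ha; simp only [Set.mem_setOf_eq] at ha ⊢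
                   exact lt_of_lt_of_le ha (min_le_left _ _))) _
          _ = ENNReal.ofReal t * μ {x | t < |f x|} := mul_comm _ _
          _ ≤ B := hB t ht
      · rw [indicator_of_notMem (fun hm => absurd hm.2 (not_lt.mpr h))]
        have hzero : μ {a | t < min |f a| l} = 0 :=
          measure_mono_null (t := (∅ : Set X))
            (fun a ha => absurd ha (not_lt.mpr (le_trans (min_le_right _ _) h)))
            measure_empty
        rw [hzero, zero_mul]
    calc ∫⁻ t in Ioi (0:ℝ), μ {a | t < min |f a| l} * ENNReal.ofReal t
        ≤ ∫⁻ t in Ioi (0:ℝ), (Ioo (0:ℝ) l).indicator (fun _ => B) t :=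
          setLIntegral_mono' measurableSet_Ioi hle
      _ ≤ ∫⁻ t, (Ioo (0:ℝ) l).indicator (fun _ => B) t := setLIntegral_le_lintegral _ _
      _ = B * volume (Ioo (0:ℝ) l) := by
          rw [lintegral_indicator measurableSet_Ioo, setLIntegral_const]
      _ = B * ENNReal.ofReal l := by rw [Real.volume_Ioo, sub_zero]
  calc ENNReal.ofReal 2 * ∫⁻ t in Ioi (0:ℝ), μ {a | t < min |f a| l} * ENNReal.ofReal t
      ≤ ENNReal.ofReal 2 * (B * ENNReal.ofReal l) := by gcongr
    _ = 2 * ENNReal.ofReal l * B := by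
        rw [ENNReal.ofReal_ofNat]; ring

/-- Core square-function weak-(1,1) summation lemma with constant 3. -/
lemma core_lemma {X : Type} [MeasurableSpace X] (μ : Measure X)
    (f : ℕ → X → ℝ) (hf : ∀ k, Measurable (f k)) (B : ℕ → ℝ≥0∞)
    (hB : ∀ k, ∀ t : ℝ, 0 < t → ENNReal.ofReal t * μ {x | t < |f k x|} ≤ B k)
    (l : ℝ) (hl : 0 < l) :
    ENNReal.ofReal l *
      μ {x | ENNReal.ofReal l < (∑' k, ENNReal.ofReal ((f k x) ^ 2)) ^ ((1:ℝ)/2)} ≤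
      3 * ∑' k, B k := by
  set L := ENNReal.ofReal l with hL
  have hL0 : L ≠ 0 := by simp [hL, hl]
  have hLtop : L ≠ ⊤ := ofReal_ne_top
  set A : Set X := ⋃ k, {x | l < |f k x|} with hA
  set Ch : Set X := {x | ENNReal.ofReal (l^2) < ∑' k, ENNReal.ofReal ((min |f k x| l) ^ 2)}
    with hCh
  -- inclusion
  have hsub : {x | L < (∑' k, ENNReal.ofReal ((f k x) ^ 2)) ^ ((1:ℝ)/2)} ⊆ A ∪ Ch := by
    intro x hx
    by_contra hnot
    rw [mem_union] at hnot
    push_neg at hnot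
    obtain ⟨hxA, hxCh⟩ := hnot
    have hxk : ∀ k, |f k x| ≤ l := by
      intro k
      by_contra h
      exact hxA (mem_iUnion.mpr ⟨k, not_le.mp h⟩)
    have heq : ∀ k, (f k x) ^ 2 = (min |f k x| l) ^ 2 := by
      intro k
      rw [min_eq_left (hxk k), sq_abs]
    have hxle : (∑' k, ENNReal.ofReal ((f k x) ^ 2)) ≤ ENNReal.ofReal (l^2) := by
      simp_rw [heq]
      exact not_lt.mp hxCh
    have : (∑' k, ENNReal.ofReal ((f k x) ^ 2)) ^ ((1:ℝ)/2) ≤ L := by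
      calc (∑' k, ENNReal.ofReal ((f k x) ^ 2)) ^ ((1:ℝ)/2)
          ≤ (ENNReal.ofReal (l^2)) ^ ((1:ℝ)/2) := by
            exact ENNReal.rpow_le_rpow hxle (by norm_num)
        _ = L := by
            rw [hL, ← Real.rpow_natCast l 2, ← ENNReal.ofReal_rpow_of_pos hl,
              ← ENNReal.rpow_mul]
            norm_num
    exact absurd hx (not_lt.mpr this)
  have hmeas_min : ∀ k, Measurable fun x => ENNReal.ofReal ((min |(f k) x| l) ^ 2) := by
    intro k
    exact (((hf k).abs.min measurable_const).pow_const 2).ennreal_ofReal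
  -- bound on A
  have hAbd : L * μ A ≤ ∑' k, B k := by
    calc L * μ A ≤ L * ∑' k, μ {x | l < |f k x|} := by gcongr; exact measure_iUnion_le _
      _ = ∑' k, L * μ {x | l < |f k x|} := ENNReal.tsum_mul_left.symm
      _ ≤ ∑' k, B k := ENNReal.tsum_le_tsum fun k => hB k l hl
  -- bound on Ch via Chebyshev
  have hChbd : L * μ Ch ≤ 2 * ∑' k, B k := by
    have hcheb : ENNReal.ofReal (l^2) * μ Ch ≤
        ∫⁻ x, ∑' k, ENNReal.ofReal ((min |f k x| l) ^ 2) ∂μ := by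
      have := mul_meas_ge_le_lintegral₀
        (f := fun x => ∑' k, ENNReal.ofReal ((min |f k x| l) ^ 2))
        (μ := μ) (Measurable.ennreal_tsum hmeas_min).aemeasurable (ENNReal.ofReal (l^2))
      refine le_trans ?_ this
      exact mul_le_mul_right (measure_mono (show Ch ⊆
        {x | ENNReal.ofReal (l^2) ≤ ∑' k, ENNReal.ofReal ((min |f k x| l) ^ 2)}
        by intro x hx; simp only [hCh, Set.mem_setOf_eq] at hx ⊢
           exact le_of_lt hx)) _
    have hint : ∫⁻ x, ∑' k, ENNReal.ofReal ((min |f k x| l) ^ 2) ∂μ ≤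
        2 * L * ∑' k, B k := by
      rw [lintegral_tsum fun k => (hmeas_min k).aemeasurable]
      calc ∑' k, ∫⁻ x, ENNReal.ofReal ((min |f k x| l) ^ 2) ∂μ
          ≤ ∑' k, 2 * L * B k :=
            ENNReal.tsum_le_tsum fun k => trunc_sq_lintegral_le μ (f k) (hf k) (B k) (hB k) l hl
        _ = 2 * L * ∑' k, B k := ENNReal.tsum_mul_left
    have h1 : L * (L * μ Ch) ≤ L * (2 * ∑' k, B k) := by
      calc L * (L * μ Ch) = ENNReal.ofReal (l^2) * μ Ch := by
            rw [← mul_assoc, hL, ← ENNReal.ofReal_mul hl.le, sq]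
        _ ≤ 2 * L * ∑' k, B k := le_trans hcheb hint
        _ = L * (2 * ∑' k, B k) := by ring
    exact (ENNReal.mul_le_mul_iff_right hL0 hLtop).mp h1
  calc L * μ {x | L < (∑' k, ENNReal.ofReal ((f k x) ^ 2)) ^ ((1:ℝ)/2)}
      ≤ L * μ (A ∪ Ch) := mul_le_mul_right (measure_mono hsub) _
    _ ≤ L * (μ A + μ Ch) := mul_le_mul_right (measure_union_le _ _) _
    _ = L * μ A + L * μ Ch := mul_add _ _ _
    _ ≤ ∑' k, B k + 2 * ∑' k, B k := add_le_add hAbd hChbd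
    _ = 3 * ∑' k, B k := by ring

/-- A square-function variant of the Stein–Weiss lemma on summing weak-type
inequalities: if `‖g_k‖_{L^{1,∞}} ≤ 1` and `c_k > 0` with `∑ c_k = 1`, then
`G = (∑ |c_k g_k|²)^{1/2}` has weak-(1,1) quasinorm bounded by an absolute constant;
equivalently, by scaling, `‖(∑|g_k|²)^{1/2}‖_{1,∞} ≲ ∑ ‖g_k‖_{1,∞}`. -/
theorem stmt_0 :
    ∃ C : ℝ≥0∞, C ≠ ⊤ ∧
      ∀ {X : Type} [MeasurableSpace X] (μ : Measure X), SigmaFinite μ →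
        ∀ (g : ℕ → X → ℝ), (∀ k, Measurable (g k)) →
        ((∀ (c : ℕ → ℝ), (∀ k, 0 < c k) → Summable c → (∑' k, c k) = 1 →
          (∀ k (l : ℝ), 0 < l → ENNReal.ofReal l * μ {x | l < |g k x|} ≤ 1) →
          ∀ (l : ℝ), 0 < l →
            ENNReal.ofReal l *
              μ {x | ENNReal.ofReal l <
                  (∑' k, ENNReal.ofReal ((c k * g k x) ^ 2)) ^ ((1:ℝ)/2)} ≤ C)
        ∧
        (∀ (l : ℝ), 0 < l →
          ENNReal.ofReal l *
            μ {x | ENNReal.ofReal l <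
                (∑' k, ENNReal.ofReal ((g k x) ^ 2)) ^ ((1:ℝ)/2)} ≤
            C * ∑' k, ⨆ (t : ℝ) (_ : 0 < t),
              ENNReal.ofReal t * μ {x | t < |g k x|})) := by
  refine ⟨3, by norm_num, ?_⟩
  intro X _ μ _ g hg
  constructor
  · intro c hc hsum hsum1 hweak l hl
    have key := core_lemma μ (fun k x => c k * g k x)
      (fun k => measurable_const.mul (hg k)) (fun k => ENNReal.ofReal (c k))
      (fun k t ht => by
        have hset : {x | t < |c k * g k x|} = {x | t / c k < |g k x|} := by
          ext x
          simp only [Set.mem_setOf_eq, abs_mul, abs_of_pos (hc k)]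
          rw [div_lt_iff₀' (hc k)]
        have hofReal : ENNReal.ofReal t = ENNReal.ofReal (c k) * ENNReal.ofReal (t / c k) := by
          rw [← ENNReal.ofReal_mul (hc k).le, mul_div_cancel₀ _ (hc k).ne']
        rw [hset, hofReal, mul_assoc]
        calc ENNReal.ofReal (c k) * (ENNReal.ofReal (t / c k) * μ {x | t / c k < |g k x|})
            ≤ ENNReal.ofReal (c k) * 1 :=
              mul_le_mul_right (hweak k (t / c k) (div_pos ht (hc k))) _
          _ = ENNReal.ofReal (c k) := mul_one _)
      l hl
    have hsumB : ∑' k, ENNReal.ofReal (c k) = 1 := by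
      rw [← ENNReal.ofReal_tsum_of_nonneg (fun k => (hc k).le) hsum, hsum1, ENNReal.ofReal_one]
    rw [hsumB, mul_one] at key
    exact key
  · intro l hl
    exact core_lemma μ g hg
      (fun k => ⨆ (t : ℝ) (_ : 0 < t), ENNReal.ofReal t * μ {x | t < |g k x|})
      (fun k t ht => le_iSup₂ (f := fun (t : ℝ) (_ : 0 < t) =>
        ENNReal.ofReal t * μ {x | t < |g k x|}) t ht) l hl
end

section
/- Let $\psi_J : \mathbb{Z} \to \mathbb{C}$ be a finite collection of functions, each supported in a pairwise disjoint interval $J \subset \mathbb{Z}$ with $|J| = 2^n$, satisfying $\sum_{x} \psi_J(x) = 0$ and $\|\psi_J\|_{\ell^1} \leq C_0 2^n$. Set $\Psi_n = \sum_J \psi_J$. If $I \subset \mathbb{Z}$ is an interval with $2^{n+s} \leq |I| < 2^{n+s+1}$ for some integer $s \geq 0$, and $\chi_I := \frac{1}{|I|}\mathbf{1}_I$, then $\|\chi_I * \Psi_n\|_{\ell^1(\mathbb{Z})} \leq C 2^{-s} \|\Psi_n\|_{\ell^1(\mathbb{Z})}$ for a constant $C$ depending only on $C_0$. -/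
open scoped BigOperators

/-- Discrete convolution on `ℤ`. -/
noncomputable def convZ (f g : ℤ → ℂ) (x : ℤ) : ℂ := ∑' y : ℤ, f y * g (x - y)

open Finset

lemma perJ (len : ℕ) (hlen : 0 < len) (a b : ℤ) (m : ℕ) (ψ : ℤ → ℂ)
    (hsupp : ∀ x : ℤ, x ∉ Finset.Ico b (b + 2 ^ m) → ψ x = 0)
    (hmean : ∑ x ∈ Finset.Ico b (b + 2 ^ m), ψ x = 0)
    (T : Finset ℤ) :
    ∑ x ∈ T, ‖((len : ℂ))⁻¹ * ∑ y ∈ Finset.Ico a (a + (len : ℤ)), ψ (x - y)‖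
      ≤ 2 * 2 ^ m / len * ∑ z ∈ Finset.Ico b (b + 2 ^ m), ‖ψ z‖ := by
  set Jf : Finset ℤ := Finset.Ico b (b + 2 ^ m) with hJf
  set A : ℝ := ∑ z ∈ Jf, ‖ψ z‖ with hA
  have hA0 : 0 ≤ A := Finset.sum_nonneg fun _ _ => norm_nonneg _
  set c : ℤ → ℂ := fun x => ((len : ℂ))⁻¹ * ∑ y ∈ Finset.Ico a (a + (len : ℤ)), ψ (x - y)
    with hc
  -- reindex
  have key : ∀ x : ℤ, ∑ y ∈ Finset.Ico a (a + (len : ℤ)), ψ (x - y)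
      = ∑ z ∈ Finset.Ico (x - a - len + 1) (x - a - len + 1 + len), ψ z := by
    intro x
    apply Finset.sum_nbij' (fun y => x - y) (fun z => x - z) <;>
      intros <;> simp_all [Finset.mem_Ico] <;> omega
  -- pointwise bound
  have hpt : ∀ x : ℤ, ‖c x‖ ≤ (len : ℝ)⁻¹ * A := by
    intro x
    rw [hc]
    simp only [norm_mul, norm_inv, Complex.norm_natCast, key x]
    have h1 : ∑ z ∈ Finset.Ico (x - a - len + 1) (x - a - len + 1 + len) ∩ Jf, ψ z
        = ∑ z ∈ Finset.Ico (x - a - len + 1) (x - a - len + 1 + len), ψ z := by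
      apply Finset.sum_subset inter_subset_left
      intro z hz hz'
      exact hsupp z fun hJ => hz' (Finset.mem_inter.2 ⟨hz, hJ⟩)
    rw [← h1]
    refine mul_le_mul_of_nonneg_left ?_ (by positivity)
    refine le_trans (norm_sum_le _ _) ?_
    exact Finset.sum_le_sum_of_subset_of_nonneg inter_subset_right
      (fun _ _ _ => norm_nonneg _)
  -- bad set
  set B : Finset ℤ := Finset.Ico (a + b) (a + b + 2 ^ m - 1)
      ∪ Finset.Ico (a + b + len) (a + b + len + 2 ^ m - 1) with hB
  have hM : (1 : ℤ) ≤ 2 ^ m := by exact_mod_cast Nat.one_le_two_pow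
  have hsupp2 : ∀ x : ℤ, x ∉ B → c x = 0 := by
    intro x hx
    rw [hc]
    simp only [key x]
    set c' : ℤ := x - a - len + 1 with hc'
    have hx1 : ¬ (a + b ≤ x ∧ x < a + b + 2 ^ m - 1) := by
      intro h; exact hx (Finset.mem_union_left _ (Finset.mem_Ico.2 h))
    have hx2 : ¬ (a + b + len ≤ x ∧ x < a + b + len + 2 ^ m - 1) := by
      intro h; exact hx (Finset.mem_union_right _ (Finset.mem_Ico.2 h))
    have hcases : c' + len ≤ b ∨ b + 2 ^ m ≤ c' ∨ (c' ≤ b ∧ b + 2 ^ m ≤ c' + len) := by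
      omega
    rcases hcases with h | h | h
    · have : ∑ z ∈ Finset.Ico c' (c' + len), ψ z = 0 := by
        apply Finset.sum_eq_zero
        intro z hz
        apply hsupp
        simp only [hJf, Finset.mem_Ico] at hz ⊢
        omega
      rw [this, mul_zero]
    · have : ∑ z ∈ Finset.Ico c' (c' + len), ψ z = 0 := by
        apply Finset.sum_eq_zero
        intro z hz
        apply hsupp
        simp only [hJf, Finset.mem_Ico] at hz ⊢
        omega
      rw [this, mul_zero]
    · have hsub : Jf ⊆ Finset.Ico c' (c' + len) := by
        intro z hz
        simp only [hJf, Finset.mem_Ico] at hz ⊢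
        omega
      have : ∑ z ∈ Finset.Ico c' (c' + len), ψ z = ∑ z ∈ Jf, ψ z := by
        symm
        apply Finset.sum_subset hsub
        intro z _ hz'
        exact hsupp z hz'
      rw [this, hmean, mul_zero]
  -- sum over T
  have h1 : ∑ x ∈ T, ‖c x‖ = ∑ x ∈ T ∩ B, ‖c x‖ := by
    symm
    apply Finset.sum_subset inter_subset_left
    intro x hx hx'
    rw [hsupp2 x fun hBx => hx' (Finset.mem_inter.2 ⟨hx, hBx⟩), norm_zero]
  have h2 : ∑ x ∈ T ∩ B, ‖c x‖ ≤ ∑ x ∈ B, ‖c x‖ :=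
    Finset.sum_le_sum_of_subset_of_nonneg inter_subset_right (fun _ _ _ => norm_nonneg _)
  have h3 : ∑ x ∈ B, ‖c x‖ ≤ B.card * ((len : ℝ)⁻¹ * A) := by
    rw [← nsmul_eq_mul]
    exact Finset.sum_le_card_nsmul _ _ _ (fun x _ => hpt x)
  have hcard : (B.card : ℝ) ≤ 2 * 2 ^ m := by
    have hc1 : B.card ≤ 2 ^ m + 2 ^ m := by
      refine le_trans (Finset.card_union_le _ _) ?_
      rw [Int.card_Ico, Int.card_Ico]
      have : ((2 ^ m : ℕ) : ℤ) = 2 ^ m := by push_cast; ring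
      omega
    have hc2 : B.card ≤ 2 * 2 ^ m := by omega
    calc (B.card : ℝ) ≤ ((2 * 2 ^ m : ℕ) : ℝ) := by exact_mod_cast hc2
      _ = 2 * 2 ^ m := by push_cast; ring
  calc ∑ x ∈ T, ‖c x‖ ≤ B.card * ((len : ℝ)⁻¹ * A) := by
        rw [h1]; exact le_trans h2 h3
    _ ≤ (2 * 2 ^ m) * ((len : ℝ)⁻¹ * A) := by
        apply mul_le_mul_of_nonneg_right hcard (by positivity)
    _ = 2 * 2 ^ m / len * A := by ring


/-- If `Ψ_n = ∑_J ψ_J` with the `ψ_J` supported in disjoint intervals `J` of length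
`2^n`, each with mean zero and `‖ψ_J‖₁ ≤ C₀ 2^n`, and `I` is an interval with
`2^{n+s} ≤ |I| < 2^{n+s+1}`, then `‖χ_I * Ψ_n‖₁ ≤ C 2^{-s} ‖Ψ_n‖₁` with `C = C(C₀)`. -/
theorem stmt_1 (C₀ : ℝ) (hC₀ : 0 < C₀) :
    ∃ C : ℝ, 0 < C ∧
      ∀ (n s : ℕ) (ι : Finset ℕ) (J : ℕ → Finset ℤ) (ψ : ℕ → ℤ → ℂ),
        (∀ i ∈ ι, ∃ a : ℤ, J i = Finset.Ico a (a + 2 ^ n)) →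
        (∀ i ∈ ι, ∀ j ∈ ι, i ≠ j → Disjoint (J i) (J j)) →
        (∀ i ∈ ι, ∀ x : ℤ, x ∉ J i → ψ i x = 0) →
        (∀ i ∈ ι, ∑ x ∈ J i, ψ i x = 0) →
        (∀ i ∈ ι, ∑ x ∈ J i, ‖ψ i x‖ ≤ C₀ * 2 ^ n) →
        ∀ (a : ℤ) (len : ℕ), 2 ^ (n + s) ≤ len → len < 2 ^ (n + s + 1) →
          (∑' x : ℤ, ‖convZ
              (fun y => ((len : ℂ))⁻¹ * (if y ∈ Finset.Ico a (a + (len : ℤ)) then 1 else 0))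
              (fun y => ∑ i ∈ ι, ψ i y) x‖)
            ≤ C / 2 ^ s * ∑' x : ℤ, ‖∑ i ∈ ι, ψ i x‖ := by
  refine ⟨2, by norm_num, ?_⟩
  intro n s ι J ψ hJint hdisj hsupp hmean _hl1 a len hlen1 hlen2
  have hlen0 : 0 < len := lt_of_lt_of_le (Nat.pow_pos (by norm_num)) hlen1
  set S : Finset ℤ := Finset.Ico a (a + (len : ℤ)) with hS
  set U : Finset ℤ := ι.biUnion J with hU
  set g : ℤ → ℂ := fun y => ∑ i ∈ ι, ψ i y with hg
  set F : ℤ → ℂ := fun y => ((len : ℂ))⁻¹ * (if y ∈ S then (1:ℂ) else 0) with hF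
  set c : ℕ → ℤ → ℂ := fun i x => ((len : ℂ))⁻¹ * ∑ y ∈ S, ψ i (x - y) with hc
  set T : Finset ℤ := Finset.image (fun p : ℤ × ℤ => p.1 + p.2) (S ×ˢ U) with hT
  -- convolution as finite sum
  have hconv : ∀ x : ℤ, convZ F g x = ∑ i ∈ ι, c i x := by
    intro x
    rw [convZ, tsum_eq_sum (s := S) (by intro y hy; simp [hF, if_neg hy])]
    have h1 : ∀ y ∈ S, F y * g (x - y) = ((len : ℂ))⁻¹ * g (x - y) := by
      intro y hy; simp [hF, if_pos hy]
    rw [Finset.sum_congr rfl h1, ← Finset.mul_sum]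
    simp only [hg, hc]
    rw [Finset.sum_comm, Finset.mul_sum]
  -- support of each c i
  have hcsupp : ∀ i ∈ ι, ∀ x : ℤ, x ∉ T → c i x = 0 := by
    intro i hi x hx
    simp only [hc]
    have : ∑ y ∈ S, ψ i (x - y) = 0 := by
      apply Finset.sum_eq_zero
      intro y hy
      apply hsupp i hi
      intro hJ
      exact hx (Finset.mem_image.2 ⟨(y, x - y),
        Finset.mem_product.2 ⟨hy, Finset.mem_biUnion.2 ⟨i, hi, hJ⟩⟩, by ring⟩)
    rw [this, mul_zero]
  have hTsupp : ∀ x : ℤ, x ∉ T → ‖convZ F g x‖ = 0 := by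
    intro x hx
    rw [hconv x, Finset.sum_eq_zero (fun i hi => hcsupp i hi x hx), norm_zero]
  -- LHS as finite sum
  rw [tsum_eq_sum (s := T) hTsupp]
  -- RHS as finite sum
  have hgsupp : ∀ x : ℤ, x ∉ U → ‖g x‖ = 0 := by
    intro x hx
    have : g x = 0 := Finset.sum_eq_zero fun i hi =>
      hsupp i hi x (fun hJ => hx (Finset.mem_biUnion.2 ⟨i, hi, hJ⟩))
    rw [this, norm_zero]
  rw [tsum_eq_sum (s := U) hgsupp]
  have hRHS : ∑ x ∈ U, ‖g x‖ = ∑ i ∈ ι, ∑ x ∈ J i, ‖ψ i x‖ := by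
    rw [hU, Finset.sum_biUnion (fun i hi j hj hij => hdisj i hi j hj hij)]
    refine Finset.sum_congr rfl fun i hi => Finset.sum_congr rfl fun x hx => ?_
    have : g x = ψ i x := by
      rw [hg]
      apply Finset.sum_eq_single_of_mem i hi
      intro j hj hji
      apply hsupp j hj
      intro hJ
      exact (Finset.disjoint_left.1 (hdisj j hj i hi hji)) hJ hx
    rw [this]
  rw [hRHS]
  -- main estimate
  have hlenR : ((2:ℝ)) ^ (n + s) ≤ (len : ℝ) := by exact_mod_cast hlen1
  have hratio : 2 * (2:ℝ) ^ n / len ≤ 2 / 2 ^ s := by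
    have h1 : 2 * (2:ℝ) ^ n / len ≤ 2 * (2:ℝ) ^ n / (2 ^ (n + s)) := by
      apply div_le_div_of_nonneg_left (by positivity) (by positivity) hlenR
    refine le_trans h1 (le_of_eq ?_)
    rw [pow_add]
    field_simp
  calc ∑ x ∈ T, ‖convZ F g x‖ ≤ ∑ x ∈ T, ∑ i ∈ ι, ‖c i x‖ := by
        refine Finset.sum_le_sum fun x _ => ?_
        rw [hconv x]
        exact norm_sum_le _ _
    _ = ∑ i ∈ ι, ∑ x ∈ T, ‖c i x‖ := Finset.sum_comm
    _ ≤ ∑ i ∈ ι, 2 / 2 ^ s * ∑ x ∈ J i, ‖ψ i x‖ := by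
        refine Finset.sum_le_sum fun i hi => ?_
        obtain ⟨b, hb⟩ := hJint i hi
        have hper := perJ len hlen0 a b n (ψ i)
          (by rw [← hb]; exact hsupp i hi) (by rw [← hb]; exact hmean i hi) T
        rw [← hb] at hper
        refine le_trans hper ?_
        apply mul_le_mul_of_nonneg_right hratio
        exact Finset.sum_nonneg fun _ _ => norm_nonneg _
    _ = 2 / 2 ^ s * ∑ i ∈ ι, ∑ x ∈ J i, ‖ψ i x‖ := by rw [Finset.mul_sum]
end

section
/- Let $H_k = \prod_{a=1}^d [-2^{a(k)}, 2^{a(k)})$ be a sequence of symmetric dyadic rectangles in $\mathbb{Z}^d$ with each coordinate exponent $a(k)$ non-decreasing in $k$. Define the eccentricity quantity $\varepsilon(l)^2 := \sup_k B(H_{k+l}, H_k)/|H_{k+l}|$, where $B(E, H) := |\{x : \partial E \cap (H - x) \neq \emptyset\}|$. Then $\sum_l \varepsilon(l) < \infty$ if and only if there exists $L$ such that $\min_{1 \leq a \leq d} (a(k+L) - a(k)) \geq 1$ for every $k$. Moreover, if such an $L$ exists, then $\varepsilon(l)^2 \lesssim 2^{-l/L}$, and hence $\sum_l \varepsilon(l)^\theta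 < \infty$ for every $\theta > 0$. -/
open scoped ENNReal

/-- The symmetric dyadic rectangle `∏_a [-2^{e a}, 2^{e a})` in `ℤ^d`. -/
def Hrect (d : ℕ) (e : Fin d → ℕ) : Set (Fin d → ℤ) :=
  {x | ∀ a, -(2 ^ (e a) : ℤ) ≤ x a ∧ x a < 2 ^ (e a)}

/-- The (discrete) boundary of a set `E ⊂ ℤ^d`. -/
def dBdry {d : ℕ} (E : Set (Fin d → ℤ)) : Set (Fin d → ℤ) :=
  {x | x ∈ E ∧ ∃ y, (∀ a, |x a - y a| ≤ 1) ∧ y ∉ E}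

/-- `B(E,H) = |{x : ∂E ∩ (H - x) ≠ ∅}|`. -/
noncomputable def Bqty {d : ℕ} (E H : Set (Fin d → ℤ)) : ℕ :=
  Nat.card {x : Fin d → ℤ | ∃ z ∈ dBdry E, z + x ∈ H}

/-- The eccentricity quantity `ε(l)² = sup_k B(H_{k+l}, H_k)/|H_{k+l}|`. -/
noncomputable def eps2 (d : ℕ) (e : Fin d → ℕ → ℕ) (l : ℕ) : ℝ≥0∞ :=
  ⨆ k : ℕ, (Bqty (Hrect d (fun a => e a (k + l))) (Hrect d (fun a => e a k)) : ℝ≥0∞)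
    / (Nat.card (Hrect d (fun a => e a (k + l))) : ℝ≥0∞)

section Aux
open Set Finset
namespace Stmt6
variable {d : ℕ}
def R (M : Fin d → ℤ) : Set (Fin d → ℤ) := Set.univ.pi fun a => Set.Ico (-(M a)) (M a)
lemma mem_R {M : Fin d → ℤ} {x : Fin d → ℤ} : x ∈ R M ↔ ∀ a, -(M a) ≤ x a ∧ x a < M a := by
  simp [R, Set.mem_pi, Set.mem_Ico]
lemma card_pi_set (s : ∀ _ : Fin d, Set ℤ) :
    Nat.card (Set.univ.pi s) = ∏ a, Nat.card (s a) := by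
  rw [Nat.card_congr (Equiv.Set.univPi s), Nat.card_pi]
lemma natcard_Ico (a b : ℤ) : Nat.card (Set.Ico a b) = (b - a).toNat := by
  rw [← Finset.coe_Ico, Nat.card_coe_set_eq, Set.ncard_coe_finset, Int.card_Ico]
lemma natcard_Icc (a b : ℤ) : Nat.card (Set.Icc a b) = (b + 1 - a).toNat := by
  rw [← Finset.coe_Icc, Nat.card_coe_set_eq, Set.ncard_coe_finset, Int.card_Icc]
lemma natcard_Ioc (a b : ℤ) : Nat.card (Set.Ioc a b) = (b - a).toNat := by
  rw [← Finset.coe_Ioc, Nat.card_coe_set_eq, Set.ncard_coe_finset, Int.card_Ioc]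
lemma card_R (M : Fin d → ℤ) : Nat.card (R M) = ∏ a, (2 * M a).toNat := by
  rw [R, card_pi_set]
  congr 1; ext a; rw [natcard_Ico]; congr 1; ring
lemma finite_R (M : Fin d → ℤ) : (R M).Finite :=
  Set.Finite.pi fun _ => Set.finite_Ico _ _

lemma bdry_subset (M : Fin d → ℤ) :
    dBdry (R M) ⊆ {z | z ∈ R M ∧ ∃ a, z a = -(M a) ∨ z a = M a - 1} := by
  rintro z ⟨hz, y, hy, hyE⟩
  refine ⟨hz, ?_⟩
  rw [mem_R] at hz
  have : ∃ a, ¬(-(M a) ≤ y a ∧ y a < M a) := by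
    by_contra h; push_neg at h; exact hyE (mem_R.2 h)
  obtain ⟨a, ha⟩ := this
  have h1 := hz a
  have h2 := hy a
  rw [abs_le] at h2
  exact ⟨a, by omega⟩

def S (M N : Fin d → ℤ) : Set (Fin d → ℤ) := {x | ∃ z ∈ dBdry (R M), z + x ∈ R N}
lemma Bqty_eq (M N : Fin d → ℤ) : Bqty (R M) (R N) = Nat.card (S M N) := rfl
def big (M N : Fin d → ℤ) (b : Fin d) : Set ℤ := Set.Icc (1 - M b - N b) (M b + N b - 1)
def V (M N : Fin d → ℤ) (a : Fin d) : Set (Fin d → ℤ) :=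
  Set.univ.pi (Function.update (big M N) a
    (Set.Icc (1 - M a - N a) (N a - M a) ∪ Set.Icc (M a - N a) (M a + N a - 1)))

lemma S_subset (M N : Fin d → ℤ) : S M N ⊆ ⋃ a, V M N a := by
  rintro x ⟨z, hzB, hzx⟩
  obtain ⟨hzR, a, ha⟩ := bdry_subset M hzB
  rw [mem_R] at hzR hzx
  simp only [Pi.add_apply] at hzx
  refine Set.mem_iUnion.2 ⟨a, ?_⟩
  intro b _
  rcases eq_or_ne b a with rfl | hb
  · rw [Function.update_self]
    have h1 := hzx b
    rcases ha with ha | ha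
    · right; simp only [Set.mem_Icc]; omega
    · left; simp only [Set.mem_Icc]; omega
  · rw [Function.update_of_ne hb]
    have h1 := hzx b
    have h2 := hzR b
    simp only [big, Set.mem_Icc]; omega

lemma finite_V (M N : Fin d → ℤ) (a : Fin d) : (V M N a).Finite := by
  apply Set.Finite.pi
  intro b
  rcases eq_or_ne b a with rfl | hb
  · rw [Function.update_self]; exact (Set.finite_Icc _ _).union (Set.finite_Icc _ _)
  · rw [Function.update_of_ne hb]; exact Set.finite_Icc _ _

lemma finite_S (M N : Fin d → ℤ) : (S M N).Finite :=
  (Set.finite_iUnion (finite_V M N)).subset (S_subset M N)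

lemma ncard_biUnion_le {α ι : Type*} [DecidableEq ι] (s : Finset ι) (V : ι → Set α) :
    (⋃ i ∈ s, V i).ncard ≤ ∑ i ∈ s, (V i).ncard := by
  induction s using Finset.induction with
  | empty => simp
  | @insert a s h ih =>
      rw [Finset.set_biUnion_insert, Finset.sum_insert h]
      exact le_trans (Set.ncard_union_le _ _) (add_le_add_right ih _)

lemma card_V_le (M N : Fin d → ℤ) (h1 : ∀ b, 1 ≤ N b) (hNM : ∀ b, N b ≤ M b) (a : Fin d) :
    Nat.card (V M N a) ≤ 4 * (N a).toNat * ∏ b ∈ Finset.univ.erase a, (4 * (M b).toNat) := by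
  rw [V, card_pi_set, ← Finset.mul_prod_erase Finset.univ _ (Finset.mem_univ a)]
  apply Nat.mul_le_mul
  · rw [Function.update_self, Nat.card_coe_set_eq]
    calc (Set.Icc (1 - M a - N a) (N a - M a) ∪ Set.Icc (M a - N a) (M a + N a - 1)).ncard
        ≤ (Set.Icc (1 - M a - N a) (N a - M a)).ncard
          + (Set.Icc (M a - N a) (M a + N a - 1)).ncard := Set.ncard_union_le _ _
      _ ≤ 4 * (N a).toNat := by
          rw [← Nat.card_coe_set_eq, ← Nat.card_coe_set_eq, natcard_Icc, natcard_Icc]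
          have := h1 a; have := hNM a; omega
  · apply Finset.prod_le_prod'
    intro b hb
    rw [Function.update_of_ne (Finset.ne_of_mem_erase hb), big, natcard_Icc]
    have := h1 b; have := hNM b; omega

lemma card_S_le (M N : Fin d → ℤ) (h1 : ∀ b, 1 ≤ N b) (hNM : ∀ b, N b ≤ M b) :
    Nat.card (S M N) ≤ ∑ a, 4 * (N a).toNat * ∏ b ∈ Finset.univ.erase a, (4 * (M b).toNat) := by
  have h2 : Nat.card (S M N) ≤ (⋃ a, V M N a).ncard := by
    rw [Nat.card_coe_set_eq]
    exact Set.ncard_le_ncard (S_subset M N) (Set.finite_iUnion (finite_V M N))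
  have h3 : (⋃ a, V M N a) = ⋃ a ∈ Finset.univ, V M N a := by simp
  refine h2.trans ?_
  rw [h3]
  refine (ncard_biUnion_le Finset.univ (V M N)).trans ?_
  apply Finset.sum_le_sum
  intro a _
  rw [← Nat.card_coe_set_eq]
  exact card_V_le M N h1 hNM a

lemma key_upper (M N : Fin d → ℤ) (s : ℕ) (h1 : ∀ a, 1 ≤ N a) (h2 : ∀ a, N a * 2 ^ s ≤ M a) :
    2 ^ s * Bqty (R M) (R N) ≤ d * 2 ^ d * Nat.card (R M) := by
  have hNM : ∀ a, N a ≤ M a := by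
    intro a
    have hp : (1:ℤ) ≤ 2 ^ s := one_le_pow₀ (by norm_num)
    have := h2 a
    nlinarith [h1 a]
  have hkey : ∀ a : Fin d, 2 ^ s * (N a).toNat ≤ (M a).toNat := by
    intro a
    have hN := h1 a; have hM := (h1 a).trans (hNM a)
    have : ((2 ^ s * (N a).toNat : ℕ) : ℤ) ≤ ((M a).toNat : ℤ) := by
      push_cast
      rw [Int.toNat_of_nonneg (by omega), Int.toNat_of_nonneg (by omega)]
      have := h2 a
      linarith [this]
    exact_mod_cast this
  calc 2 ^ s * Bqty (R M) (R N)
      ≤ 2 ^ s * ∑ a, 4 * (N a).toNat * ∏ b ∈ Finset.univ.erase a, (4 * (M b).toNat) := by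
        rw [Bqty_eq]
        exact Nat.mul_le_mul_left _ (card_S_le M N h1 hNM)
    _ = ∑ a, (4 * (2 ^ s * (N a).toNat)) * ∏ b ∈ Finset.univ.erase a, (4 * (M b).toNat) := by
        rw [Finset.mul_sum]; congr 1; ext a; ring
    _ ≤ ∑ a, (4 * (M a).toNat) * ∏ b ∈ Finset.univ.erase a, (4 * (M b).toNat) := by
        apply Finset.sum_le_sum
        intro a _
        exact Nat.mul_le_mul_right _ (Nat.mul_le_mul_left _ (hkey a))
    _ = ∑ _a : Fin d, ∏ b, (4 * (M b).toNat) := by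
        congr 1; ext a
        exact Finset.mul_prod_erase Finset.univ (fun b => 4 * (M b).toNat) (Finset.mem_univ a)
    _ = d * ∏ b, (4 * (M b).toNat) := by
        rw [Finset.sum_const, Finset.card_univ, Fintype.card_fin, smul_eq_mul]
    _ = d * 2 ^ d * Nat.card (R M) := by
        rw [card_R, mul_assoc]
        congr 1
        have hstep : ∀ b : Fin d, 4 * (M b).toNat = 2 * (2 * M b).toNat := by
          intro b
          have := (h1 b).trans (hNM b)
          omega
        calc ∏ b, (4 * (M b).toNat) = ∏ b, 2 * (2 * M b).toNat :=
              Finset.prod_congr rfl fun b _ => hstep b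
          _ = (∏ _b : Fin d, 2) * ∏ b, (2 * M b).toNat := Finset.prod_mul_distrib
          _ = 2 ^ d * ∏ b, (2 * M b).toNat := by
              rw [Finset.prod_const, Finset.card_univ, Fintype.card_fin]

end Stmt6

namespace Stmt6lower
open Stmt6

lemma key_lower {d : ℕ} (M N : Fin d → ℤ) (h1 : ∀ a, 1 ≤ N a) (hNM : ∀ a, N a ≤ M a)
    (a₀ : Fin d) (heq : N a₀ = M a₀) :
    Nat.card (R M) ≤ Bqty (R M) (R N) := by
  classical
  set T : Set (Fin d → ℤ) := Set.univ.pi (Function.update (fun b => Set.Ioc (-(M b)) (M b)) a₀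
      (Set.Icc (1 - M a₀ - N a₀) (N a₀ - M a₀))) with hT
  have hTS : T ⊆ S M N := by
    intro x hx
    have hxb : ∀ b, b ≠ a₀ → -(M b) < x b ∧ x b ≤ M b := by
      intro b hb
      have := hx b (Set.mem_univ b)
      rw [Function.update_of_ne hb] at this
      exact this
    have hxa : 1 - M a₀ - N a₀ ≤ x a₀ ∧ x a₀ ≤ N a₀ - M a₀ := by
      have := hx a₀ (Set.mem_univ a₀)
      rw [Function.update_self] at this
      exact this
    set z : Fin d → ℤ := Function.update (fun b => -(x b)) a₀ (M a₀ - 1) with hz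
    have hzmem : z ∈ R M := by
      rw [mem_R]
      intro b
      rcases eq_or_ne b a₀ with rfl | hb
      · rw [hz, Function.update_self]
        have := (h1 b).trans (hNM b); omega
      · rw [hz, Function.update_of_ne hb]
        have := hxb b hb; omega
    refine ⟨z, ⟨hzmem, Function.update z a₀ (M a₀), ?_, ?_⟩, ?_⟩
    · intro b
      rcases eq_or_ne b a₀ with rfl | hb
      · rw [Function.update_self, hz, Function.update_self]; simp
      · rw [Function.update_of_ne hb]; simp
    · intro hmem
      have := (mem_R.1 hmem) a₀
      rw [Function.update_self] at this
      omega
    · rw [mem_R]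
      intro b
      simp only [Pi.add_apply]
      rcases eq_or_ne b a₀ with rfl | hb
      · rw [hz, Function.update_self]
        omega
      · rw [hz, Function.update_of_ne hb]
        have := h1 b; omega
  have hcardT : Nat.card T = Nat.card (R M) := by
    rw [hT, card_pi_set, card_R]
    apply Finset.prod_congr rfl
    intro b _
    rcases eq_or_ne b a₀ with rfl | hb
    · rw [Function.update_self, natcard_Icc]
      omega
    · rw [Function.update_of_ne hb, natcard_Ioc]
      congr 1; ring
  rw [Bqty_eq, ← hcardT, Nat.card_coe_set_eq, Nat.card_coe_set_eq]
  exact Set.ncard_le_ncard hTS (finite_S M N)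

end Stmt6lower

namespace Stmt6
lemma Hrect_eq {d : ℕ} (e : Fin d → ℕ) : Hrect d e = R (fun a => 2 ^ (e a)) := by
  ext x; simp [Hrect, mem_R]

lemma card_R_pos {d : ℕ} (M : Fin d → ℤ) (hM : ∀ a, 1 ≤ M a) : 0 < Nat.card (R M) := by
  rw [card_R]; apply Finset.prod_pos; intro a _; have := hM a; omega

variable {d : ℕ} {e : Fin d → ℕ → ℕ}

lemma step_lemma {L : ℕ} (h : ∀ k a, e a k + 1 ≤ e a (k + L)) (a : Fin d) (k : ℕ) :
    ∀ t, e a k + t ≤ e a (k + t * L) := by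
  intro t
  induction t with
  | zero => simp
  | succ t ih =>
      have h2 := h (k + t * L) a
      have heq : k + t * L + L = k + (t + 1) * L := by ring
      rw [← heq]
      omega

lemma term_le (hmono : ∀ a, Monotone (e a)) {L : ℕ}
    (h : ∀ k a, e a k + 1 ≤ e a (k + L)) (l k : ℕ) :
    (Bqty (Hrect d (fun a => e a (k + l))) (Hrect d (fun a => e a k)) : ℝ≥0∞)
      / (Nat.card (Hrect d (fun a => e a (k + l))) : ℝ≥0∞)
    ≤ ((d : ℝ≥0∞) * 2 ^ d) / 2 ^ (l / L) := by
  set M : Fin d → ℤ := fun a => 2 ^ (e a (k + l)) with hM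
  set N : Fin d → ℤ := fun a => 2 ^ (e a k) with hN
  set s : ℕ := l / L with hs
  have h1 : ∀ a, 1 ≤ N a := fun a => one_le_pow₀ (by norm_num)
  have hM1 : ∀ a, 1 ≤ M a := fun a => one_le_pow₀ (by norm_num)
  have h2 : ∀ a, N a * 2 ^ s ≤ M a := by
    intro a
    have hexp : e a k + s ≤ e a (k + l) := by
      have h3 := step_lemma h a k s
      have h4 : k + s * L ≤ k + l := by
        have h5 := Nat.div_mul_le_self l L
        rw [← hs] at h5
        omega
      exact h3.trans (hmono a h4)
    calc N a * 2 ^ s = 2 ^ (e a k + s) := by rw [hN]; rw [pow_add]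
      _ ≤ 2 ^ (e a (k + l)) := pow_le_pow_right₀ (by norm_num) hexp
  have key := key_upper M N s h1 h2
  rw [Hrect_eq (fun a => e a (k + l)), Hrect_eq (fun a => e a k)]
  have hcpos := card_R_pos M hM1
  have hc0 : (Nat.card (R M) : ℝ≥0∞) ≠ 0 := by
    simp only [ne_eq, Nat.cast_eq_zero]
    omega
  have hctop : (Nat.card (R M) : ℝ≥0∞) ≠ ⊤ := ENNReal.natCast_ne_top _
  have h2s : ((2 : ℝ≥0∞) ^ s) ≠ 0 := by positivity
  have h2stop : ((2 : ℝ≥0∞) ^ s) ≠ ⊤ := by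
    exact ENNReal.pow_ne_top (by norm_num)
  have keyC : (2 : ℝ≥0∞) ^ s * (Bqty (R M) (R N) : ℝ≥0∞)
      ≤ (d : ℝ≥0∞) * 2 ^ d * (Nat.card (R M) : ℝ≥0∞) := by
    have := (Nat.cast_le (α := ℝ≥0∞)).2 key
    push_cast at this
    convert this using 2 <;> push_cast <;> ring
  rw [ENNReal.div_le_iff hc0 hctop]
  calc (Bqty (R M) (R N) : ℝ≥0∞)
      = (2 : ℝ≥0∞) ^ s * (Bqty (R M) (R N) : ℝ≥0∞) / 2 ^ s := by
        rw [mul_comm, mul_div_assoc, ENNReal.div_self h2s h2stop, mul_one]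
    _ ≤ ((d : ℝ≥0∞) * 2 ^ d * (Nat.card (R M) : ℝ≥0∞)) / 2 ^ s := by
        exact ENNReal.div_le_div_right keyC _
    _ = (d : ℝ≥0∞) * 2 ^ d / 2 ^ s * (Nat.card (R M) : ℝ≥0∞) := by
        rw [div_eq_mul_inv, div_eq_mul_inv]; ring

end Stmt6

namespace Stmt6B
open Stmt6

variable {d : ℕ} {e : Fin d → ℕ → ℕ}

lemma eps2_le (hmono : ∀ a, Monotone (e a)) {L : ℕ}
    (h : ∀ k a, e a k + 1 ≤ e a (k + L)) (l : ℕ) :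
    eps2 d e l ≤ ((d : ℝ≥0∞) * 2 ^ d) / 2 ^ (l / L) :=
  iSup_le fun k => term_le hmono h l k

lemma two_rpow_bound (L : ℕ) (hL : 0 < L) (l : ℕ) :
    ((2 : ℝ≥0∞) ^ (l / L))⁻¹ ≤ 2 * (2 : ℝ≥0∞) ^ (-(l : ℝ) / (L : ℝ)) := by
  have h1 : ((2 : ℝ≥0∞) ^ (l / L))⁻¹ = (2 : ℝ≥0∞) ^ (-((l / L : ℕ) : ℝ)) := by
    rw [ENNReal.rpow_neg, ENNReal.rpow_natCast]
  have h2 : (2 : ℝ≥0∞) ^ (1 + (-(l : ℝ) / (L : ℝ))) = 2 * (2 : ℝ≥0∞) ^ (-(l : ℝ) / (L : ℝ)) := by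
    rw [ENNReal.rpow_add _ _ (by norm_num) (by norm_num), ENNReal.rpow_one]
  rw [h1, ← h2]
  apply ENNReal.rpow_le_rpow_of_exponent_le (by norm_num)
  -- -(↑(l / L)) ≤ 1 - l/L
  have hq : (l : ℝ) < (L : ℝ) * ((l / L : ℕ) : ℝ) + L := by
    have h3 := Nat.div_add_mod l L
    have h4 := Nat.mod_lt l hL
    have : l < L * (l / L) + L := by omega
    exact_mod_cast this
  have hLpos : (0 : ℝ) < L := by exact_mod_cast hL
  rw [neg_div, ← sub_eq_add_neg]
  have : (l : ℝ) / L ≤ ((l / L : ℕ) : ℝ) + 1 := by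
    rw [div_le_iff₀ hLpos]
    nlinarith
  linarith

lemma eps2_le_final (hd : 0 < d) (hmono : ∀ a, Monotone (e a)) {L : ℕ}
    (h : ∀ k a, e a k + 1 ≤ e a (k + L)) (l : ℕ) :
    eps2 d e l ≤ ((d : ℝ≥0∞) * 2 ^ (d + 1)) * (2 : ℝ≥0∞) ^ (-(l : ℝ) / (L : ℝ)) := by
  have hL : 0 < L := by
    rcases Nat.eq_zero_or_pos L with rfl | hL
    · exfalso
      have := h 0 ⟨0, hd⟩
      norm_num at this
    · exact hL
  refine (eps2_le hmono h l).trans ?_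
  rw [div_eq_mul_inv]
  calc (d : ℝ≥0∞) * 2 ^ d * ((2 : ℝ≥0∞) ^ (l / L))⁻¹
      ≤ (d : ℝ≥0∞) * 2 ^ d * (2 * (2 : ℝ≥0∞) ^ (-(l : ℝ) / (L : ℝ))) := by
        exact mul_le_mul_right (two_rpow_bound L hL l) _
    _ = ((d : ℝ≥0∞) * 2 ^ (d + 1)) * (2 : ℝ≥0∞) ^ (-(l : ℝ) / (L : ℝ)) := by
        rw [pow_succ]; ring

end Stmt6B

namespace Stmt6C
open Stmt6 Stmt6B Stmt6lower

variable {d : ℕ} {e : Fin d → ℕ → ℕ}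

lemma tsum_theta_ne_top (hd : 0 < d) (hmono : ∀ a, Monotone (e a)) {L : ℕ}
    (h : ∀ k a, e a k + 1 ≤ e a (k + L)) (θ : ℝ) (hθ : 0 < θ) :
    (∑' l : ℕ, (eps2 d e l) ^ (θ / 2)) ≠ ⊤ := by
  have hL : 0 < L := by
    rcases Nat.eq_zero_or_pos L with rfl | hL
    · exfalso; have := h 0 ⟨0, hd⟩; norm_num at this
    · exact hL
  set c : ℝ≥0∞ := (d : ℝ≥0∞) * 2 ^ (d + 1) with hc
  have hcne : c ≠ ⊤ := by
    rw [hc]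
    exact ENNReal.mul_ne_top (ENNReal.natCast_ne_top _) (ENNReal.pow_ne_top (by norm_num))
  set r : ℝ≥0∞ := (2 : ℝ≥0∞) ^ (-(θ / 2) / (L : ℝ)) with hr
  have hrlt : r < 1 := by
    rw [hr]
    have : (2 : ℝ≥0∞) ^ (-(θ / 2) / (L : ℝ)) < 2 ^ (0 : ℝ) := by
      apply ENNReal.rpow_lt_rpow_of_exponent_lt (by norm_num) (by norm_num)
      apply div_neg_of_neg_of_pos (by linarith) (by exact_mod_cast hL)
    simpa using this
  have hterm : ∀ l : ℕ, (eps2 d e l) ^ (θ / 2) ≤ c ^ (θ / 2) * r ^ l := by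
    intro l
    have h1 : (eps2 d e l) ^ (θ / 2) ≤ (c * (2 : ℝ≥0∞) ^ (-(l : ℝ) / (L : ℝ))) ^ (θ / 2) :=
      ENNReal.rpow_le_rpow (eps2_le_final hd hmono h l) (by linarith)
    refine h1.trans_eq ?_
    rw [ENNReal.mul_rpow_of_nonneg _ _ (by linarith)]
    congr 1
    rw [← ENNReal.rpow_natCast r l, hr, ← ENNReal.rpow_mul, ← ENNReal.rpow_mul]
    congr 1
    ring
  have hsum : (∑' l : ℕ, (eps2 d e l) ^ (θ / 2)) ≤ c ^ (θ / 2) * (1 - r)⁻¹ := by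
    calc (∑' l : ℕ, (eps2 d e l) ^ (θ / 2)) ≤ ∑' l : ℕ, c ^ (θ / 2) * r ^ l :=
          ENNReal.tsum_le_tsum hterm
      _ = c ^ (θ / 2) * ∑' l : ℕ, r ^ l := ENNReal.tsum_mul_left
      _ = c ^ (θ / 2) * (1 - r)⁻¹ := by rw [ENNReal.tsum_geometric]
  refine ne_top_of_le_ne_top ?_ hsum
  apply ENNReal.mul_ne_top
  · exact ENNReal.rpow_ne_top_of_nonneg (by linarith) hcne
  · rw [ENNReal.inv_ne_top]
    exact (tsub_pos_of_lt hrlt).ne'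

lemma eps2_ge_one (hmono : ∀ a, Monotone (e a)) (l : ℕ)
    (hbad : ∃ (k : ℕ) (a : Fin d), e a (k + l) ≤ e a k) : 1 ≤ eps2 d e l := by
  obtain ⟨k, a, hk⟩ := hbad
  set M : Fin d → ℤ := fun a => 2 ^ (e a (k + l)) with hM
  set N : Fin d → ℤ := fun a => 2 ^ (e a k) with hN
  have h1 : ∀ b, 1 ≤ N b := fun b => one_le_pow₀ (by norm_num)
  have hM1 : ∀ b, 1 ≤ M b := fun b => one_le_pow₀ (by norm_num)
  have hNM : ∀ b, N b ≤ M b := by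
    intro b
    exact pow_le_pow_right₀ (by norm_num) (hmono b (Nat.le_add_right k l))
  have heq : N a = M a := by
    have h5 : e a (k + l) = e a k := le_antisymm hk (hmono a (Nat.le_add_right k l))
    simp only [hN, hM, h5]
  have hkey := key_lower M N h1 hNM a heq
  have hterm : (1 : ℝ≥0∞) ≤
      (Bqty (Hrect d (fun b => e b (k + l))) (Hrect d (fun b => e b k)) : ℝ≥0∞)
        / (Nat.card (Hrect d (fun b => e b (k + l))) : ℝ≥0∞) := by
    rw [Hrect_eq (fun b => e b (k + l)), Hrect_eq (fun b => e b k)]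
    have hcpos := card_R_pos M hM1
    rw [ENNReal.le_div_iff_mul_le (Or.inl (Nat.cast_ne_zero.2 hcpos.ne'))
      (Or.inl (ENNReal.natCast_ne_top _)), one_mul]
    exact Nat.cast_le.2 hkey
  exact hterm.trans (le_iSup (fun k => (Bqty (Hrect d (fun b => e b (k + l)))
    (Hrect d (fun b => e b k)) : ℝ≥0∞) / (Nat.card (Hrect d (fun b => e b (k + l))) : ℝ≥0∞)) k)

lemma tsum_top_of_bad (hmono : ∀ a, Monotone (e a))
    (hbad : ¬ ∃ L : ℕ, ∀ k : ℕ, ∀ a : Fin d, e a k + 1 ≤ e a (k + L)) :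
    (∑' l : ℕ, (eps2 d e l) ^ ((1:ℝ)/2)) = ⊤ := by
  push_neg at hbad
  have hone : ∀ l : ℕ, (1 : ℝ≥0∞) ≤ (eps2 d e l) ^ ((1:ℝ)/2) := by
    intro l
    obtain ⟨k, a, hka⟩ := hbad l
    have h1 : 1 ≤ eps2 d e l := eps2_ge_one hmono l ⟨k, a, by omega⟩
    calc (1 : ℝ≥0∞) = 1 ^ ((1:ℝ)/2) := (ENNReal.one_rpow _).symm
      _ ≤ (eps2 d e l) ^ ((1:ℝ)/2) := ENNReal.rpow_le_rpow h1 (by norm_num)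
  rw [← top_le_iff]
  calc (⊤ : ℝ≥0∞) = ∑' _ : ℕ, (1 : ℝ≥0∞) :=
        (ENNReal.tsum_const_eq_top_of_ne_zero one_ne_zero).symm
    _ ≤ _ := ENNReal.tsum_le_tsum hone

end Stmt6C

end Aux

/-- Summable eccentricity `∑_l ε(l) < ∞` is equivalent to the existence of `L` with
`min_a (a(k+L) - a(k)) ≥ 1` for all `k`; moreover such an `L` gives
`ε(l)² ≲ 2^{-l/L}` and hence `∑_l ε(l)^θ < ∞` for every `θ > 0`. -/

theorem stmt_6 (d : ℕ) (hd : 0 < d) (e : Fin d → ℕ → ℕ)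
    (hmono : ∀ a, Monotone (e a)) :
    ((∑' l : ℕ, (eps2 d e l) ^ ((1:ℝ)/2)) ≠ ⊤ ↔
      ∃ L : ℕ, ∀ k : ℕ, ∀ a : Fin d, e a k + 1 ≤ e a (k + L))
    ∧ ∀ L : ℕ, (∀ k : ℕ, ∀ a : Fin d, e a k + 1 ≤ e a (k + L)) →
        (∃ c : ℝ≥0∞, c ≠ ⊤ ∧ ∀ l : ℕ,
          eps2 d e l ≤ c * (2 : ℝ≥0∞) ^ (-(l : ℝ) / (L : ℝ)))
        ∧ ∀ θ : ℝ, 0 < θ → (∑' l : ℕ, (eps2 d e l) ^ (θ / 2)) ≠ ⊤ := by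
  constructor
  · constructor
    · intro hne
      by_contra hbad
      exact hne (Stmt6C.tsum_top_of_bad hmono hbad)
    · rintro ⟨L, hL⟩
      exact Stmt6C.tsum_theta_ne_top hd hmono (fun k a => hL k a) 1 one_pos
  · intro L hL
    refine ⟨⟨(d : ℝ≥0∞) * 2 ^ (d + 1),
      ENNReal.mul_ne_top (ENNReal.natCast_ne_top _) (ENNReal.pow_ne_top (by norm_num)),
      fun l => Stmt6B.eps2_le_final hd hmono (fun k a => hL k a) l⟩,
      fun θ hθ => Stmt6C.tsum_theta_ne_top hd hmono (fun k a => hL k a) θ hθ⟩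
end

section
/- Let $\sigma_k$ be the partition of $\mathbb{Z}^d$ into dyadic rectangles $\prod_{a=1}^d 2^{a(k)}[m_a, m_a+1)$, and for each $Q \in \sigma_k$ with center $x_Q$, let $g : \mathbb{Z}^d \to [0,\infty)$ satisfy: (i) for every $x \in Q$, $g(x) \lesssim \sum_{Q' \in \sigma_k, Q' \subset 3Q} g(x_{Q'})$, and (ii) for every $Q$ there is a subset $X(Q) \subset Q$ with $|X(Q)| \gtrsim_d |Q|$ on which $g(x_Q) \leq \inf_{y \in X(Q)} g(y)$. Then for each $1 \leq p < \infty$, $\|g\|_{\ell^p(\mathbb{Z}^d)} \approx_p \|\sum_{Q \in \sigma_k} g(x_Q) \mathbf{1}_{3Q}\|_{\ell^p(\mathbb{Z}^d)}$, with implied constants depending only on $p$ and $d$. -/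
open scoped ENNReal

/-- The atom `Q_m = ∏_a [2^{s a} m_a, 2^{s a}(m_a+1))` of the partition `σ` of `ℤ^d`
into congruent dyadic rectangles. -/
noncomputable def atomQ (d : ℕ) (s : Fin d → ℕ) (m : Fin d → ℤ) : Finset (Fin d → ℤ) :=
  Finset.Icc (fun a => 2 ^ (s a) * m a) (fun a => 2 ^ (s a) * (m a + 1) - 1)

/-- The tripled rectangle `3Q_m`, concentric with `Q_m` with triple side lengths. -/
noncomputable def atomQ3 (d : ℕ) (s : Fin d → ℕ) (m : Fin d → ℤ) : Finset (Fin d → ℤ) :=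
  Finset.Icc (fun a => 2 ^ (s a) * (m a - 1)) (fun a => 2 ^ (s a) * (m a + 2) - 1)

private lemma ediv_L1 {n x k : ℤ} (hn : 0 < n) : n * k ≤ x ↔ k ≤ x / n := by
  rw [Int.le_ediv_iff_mul_le hn, mul_comm]

private lemma ediv_L2 {n x k : ℤ} (hn : 0 < n) : x ≤ n * k - 1 ↔ x / n ≤ k - 1 := by
  rw [Int.le_sub_one_iff, Int.le_sub_one_iff, Int.ediv_lt_iff_lt_mul hn, mul_comm]

private lemma mem_atomQ_iff {d : ℕ} {s : Fin d → ℕ} {m x : Fin d → ℤ} :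
    x ∈ atomQ d s m ↔ (fun a => x a / 2 ^ (s a)) = m := by
  simp only [atomQ, Finset.mem_Icc, Pi.le_def, funext_iff]
  rw [← forall_and]
  refine forall_congr' fun a => ?_
  have hn : (0:ℤ) < 2 ^ (s a) := by positivity
  rw [ediv_L1 hn, ediv_L2 hn]
  omega

private lemma mem_atomQ3_iff {d : ℕ} {s : Fin d → ℕ} {m x : Fin d → ℤ} :
    x ∈ atomQ3 d s m ↔
      m ∈ Finset.Icc (fun a => x a / 2 ^ (s a) - 1) (fun a => x a / 2 ^ (s a) + 1) := by
  simp only [atomQ3, Finset.mem_Icc, Pi.le_def]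
  rw [← forall_and, ← forall_and]
  refine forall_congr' fun a => ?_
  have hn : (0:ℤ) < 2 ^ (s a) := by positivity
  rw [ediv_L1 hn, ediv_L2 hn]
  omega

private lemma card_atomQ3_eq {d : ℕ} {s : Fin d → ℕ} {m : Fin d → ℤ} :
    (atomQ3 d s m).card = 3 ^ d * (atomQ d s m).card := by
  simp only [atomQ, atomQ3, Pi.card_Icc, Int.card_Icc]
  have h1 : ∀ a : Fin d, (2 ^ (s a) * (m a + 2) - 1 + 1 - 2 ^ (s a) * (m a - 1)).toNat
      = 3 * 2 ^ (s a) := by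
    intro a
    have : (2 ^ (s a) * (m a + 2) - 1 + 1 - 2 ^ (s a) * (m a - 1) : ℤ)
        = ((3 * 2 ^ (s a) : ℕ) : ℤ) := by push_cast; ring
    rw [this, Int.toNat_natCast]
  have h2 : ∀ a : Fin d, (2 ^ (s a) * (m a + 1) - 1 + 1 - 2 ^ (s a) * m a).toNat
      = 2 ^ (s a) := by
    intro a
    have : (2 ^ (s a) * (m a + 1) - 1 + 1 - 2 ^ (s a) * m a : ℤ) = ((2 ^ (s a) : ℕ) : ℤ) := by
      push_cast; ring
    rw [this, Int.toNat_natCast]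
  rw [Finset.prod_congr rfl fun a _ => h1 a, Finset.prod_congr rfl fun a _ => h2 a,
    Finset.prod_mul_distrib, Finset.prod_const, Finset.card_univ, Fintype.card_fin]

private lemma pow_sum_le {ι : Type*} (s : Finset ι) (f : ι → ℝ≥0∞) {p : ℝ} (hp : 1 ≤ p) :
    (∑ i ∈ s, f i) ^ p ≤ (s.card : ℝ≥0∞) ^ p * ∑ i ∈ s, f i ^ p := by
  have hp0 : 0 < p := lt_of_lt_of_le one_pos hp
  have h1 : ∀ i ∈ s, f i ≤ (∑ j ∈ s, f j ^ p) ^ (1/p) := by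
    intro i hi
    calc f i = (f i ^ p) ^ (1/p) := by
          rw [← ENNReal.rpow_mul, mul_one_div, div_self hp0.ne', ENNReal.rpow_one]
      _ ≤ _ := ENNReal.rpow_le_rpow
          (Finset.single_le_sum (f := fun j => f j ^ p) (fun j _ => zero_le) hi)
          (by positivity)
  calc (∑ i ∈ s, f i) ^ p
      ≤ ((s.card : ℝ≥0∞) * (∑ j ∈ s, f j ^ p) ^ (1/p)) ^ p := by
        refine ENNReal.rpow_le_rpow ?_ hp0.le
        calc ∑ i ∈ s, f i ≤ ∑ _i ∈ s, (∑ j ∈ s, f j ^ p) ^ (1/p) := Finset.sum_le_sum h1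
          _ = s.card * (∑ j ∈ s, f j ^ p) ^ (1/p) := by
              rw [Finset.sum_const, nsmul_eq_mul]
    _ = (s.card : ℝ≥0∞) ^ p * ∑ j ∈ s, f j ^ p := by
        rw [ENNReal.mul_rpow_of_nonneg _ _ hp0.le, ← ENNReal.rpow_mul, one_div,
          inv_mul_cancel₀ hp0.ne', ENNReal.rpow_one]

private lemma tsum_partition {d : ℕ} {s : Fin d → ℕ} (f : (Fin d → ℤ) → ℝ≥0∞) :
    ∑' x : Fin d → ℤ, f x = ∑' m : Fin d → ℤ, ∑ y ∈ atomQ d s m, f y := by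
  have h : ∀ m : Fin d → ℤ, ∑ y ∈ atomQ d s m, f y
      = ∑' y : Fin d → ℤ, if y ∈ atomQ d s m then f y else 0 := by
    intro m
    rw [tsum_eq_sum (s := atomQ d s m) (fun y hy => if_neg hy)]
    exact Finset.sum_congr rfl fun y hy => (if_pos hy).symm
  simp_rw [h]
  rw [ENNReal.tsum_comm]
  refine (tsum_congr fun y => ?_).symm
  rw [tsum_eq_single (fun a => y a / 2 ^ (s a))
    (fun m hm => if_neg fun h => hm (mem_atomQ_iff.mp h).symm)]
  exact if_pos (mem_atomQ_iff.mpr rfl)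

private lemma tsum_ind {d : ℕ} (S : Finset (Fin d → ℤ)) (c : ℝ≥0∞) :
    ∑' x : Fin d → ℤ, (if x ∈ S then c else 0) = S.card * c := by
  rw [tsum_eq_sum (s := S) (fun x hx => if_neg hx),
    Finset.sum_congr rfl (fun x hx => if_pos hx), Finset.sum_const, nsmul_eq_mul]

set_option maxHeartbeats 1000000 in
/-- Comparison of a function `g` with its discretization `∑_Q g(x_Q) 1_{3Q}` in `ℓ^p`,
under the two structural hypotheses (local domination by neighboring centers, and a
large subset of each atom on which the center value is an infimum). -/
theorem stmt_7 (d : ℕ) (C₁ c₂ : NNReal) (hc₂ : 0 < c₂) (p : ℝ) (hp : 1 ≤ p) :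
    ∃ C : ℝ≥0∞, 0 < C ∧ C ≠ ⊤ ∧
      ∀ (s : Fin d → ℕ) (g : (Fin d → ℤ) → NNReal) (ξ : (Fin d → ℤ) → (Fin d → ℤ)),
        (∀ m, ξ m ∈ atomQ d s m) →
        (∀ m, ∀ x ∈ atomQ d s m,
          g x ≤ C₁ * ∑ m' ∈ Finset.Icc (fun a => m a - 1) (fun a => m a + 1), g (ξ m')) →
        (∀ m, ∃ Xq : Finset (Fin d → ℤ), Xq ⊆ atomQ d s m ∧
          (c₂ : ℝ) * (atomQ d s m).card ≤ Xq.card ∧ ∀ y ∈ Xq, g (ξ m) ≤ g y) →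
        ((∑' x : Fin d → ℤ, ((g x : ℝ≥0∞)) ^ p) ≤
            C * ∑' x : Fin d → ℤ,
              (∑' m : Fin d → ℤ, if x ∈ atomQ3 d s m then (g (ξ m) : ℝ≥0∞) else 0) ^ p)
        ∧ ((∑' x : Fin d → ℤ,
              (∑' m : Fin d → ℤ, if x ∈ atomQ3 d s m then (g (ξ m) : ℝ≥0∞) else 0) ^ p) ≤
            C * ∑' x : Fin d → ℤ, ((g x : ℝ≥0∞)) ^ p) := by
  have hp0 : (0:ℝ) < p := lt_of_lt_of_le one_pos hp
  set A : ℝ≥0∞ := ((C₁ : ℝ≥0∞) + 1) ^ p with hA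
  set B : ℝ≥0∞ := ((3:ℝ≥0∞) ^ d) ^ p * 3 ^ d * (c₂ : ℝ≥0∞)⁻¹ with hB
  refine ⟨A + B + 1, lt_of_lt_of_le zero_lt_one (le_add_self), ?_, ?_⟩
  · refine ENNReal.add_ne_top.mpr ⟨ENNReal.add_ne_top.mpr ⟨?_, ?_⟩, ENNReal.one_ne_top⟩
    · exact ENNReal.rpow_ne_top_of_nonneg hp0.le
        (ENNReal.add_ne_top.mpr ⟨ENNReal.coe_ne_top, ENNReal.one_ne_top⟩)
    · exact ENNReal.mul_ne_top
        (ENNReal.mul_ne_top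
          (ENNReal.rpow_ne_top_of_nonneg hp0.le (ENNReal.pow_ne_top (by simp)))
          (ENNReal.pow_ne_top (by simp)))
        (ENNReal.inv_ne_top.mpr (by exact_mod_cast hc₂.ne'))
  intro s g ξ hξ hdom hinf
  -- the tripled-region sum as a finite sum
  have hregion : ∀ (x : Fin d → ℤ) (f : (Fin d → ℤ) → ℝ≥0∞),
      (∑' m : Fin d → ℤ, if x ∈ atomQ3 d s m then f m else 0)
        = ∑ m ∈ Finset.Icc (fun a => x a / 2 ^ (s a) - 1) (fun a => x a / 2 ^ (s a) + 1),
            f m := by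
    intro x f
    rw [tsum_eq_sum (s := Finset.Icc (fun a => x a / 2 ^ (s a) - 1)
      (fun a => x a / 2 ^ (s a) + 1)) (fun m hm => if_neg fun h => hm (mem_atomQ3_iff.mp h))]
    exact Finset.sum_congr rfl fun m hm => if_pos (mem_atomQ3_iff.mpr hm)
  have hcardT : ∀ x : Fin d → ℤ,
      (Finset.Icc (fun a => x a / 2 ^ (s a) - 1) (fun a => x a / 2 ^ (s a) + 1)).card
        = 3 ^ d := by
    intro x
    rw [Pi.card_Icc]
    have h3 : ∀ a : Fin d,
        (Finset.Icc (x a / 2 ^ (s a) - 1) (x a / 2 ^ (s a) + 1)).card = 3 := by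
      intro a; rw [Int.card_Icc]; omega
    rw [Finset.prod_congr rfl fun a _ => h3 a, Finset.prod_const, Finset.card_univ,
      Fintype.card_fin]
  constructor
  · -- first inequality
    calc ∑' x : Fin d → ℤ, ((g x : ℝ≥0∞)) ^ p
        ≤ ∑' x : Fin d → ℤ,
            (((C₁:ℝ≥0∞) + 1) *
              ∑' m : Fin d → ℤ, if x ∈ atomQ3 d s m then (g (ξ m) : ℝ≥0∞) else 0) ^ p := by
          refine ENNReal.tsum_le_tsum fun x => ENNReal.rpow_le_rpow ?_ hp0.le
          rw [hregion x (fun m => (g (ξ m) : ℝ≥0∞))]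
          have hd := hdom (fun a => x a / 2 ^ (s a)) x (mem_atomQ_iff.mpr rfl)
          calc (g x : ℝ≥0∞)
              ≤ (C₁:ℝ≥0∞) * ∑ m' ∈ Finset.Icc (fun a => x a / 2 ^ (s a) - 1)
                  (fun a => x a / 2 ^ (s a) + 1), (g (ξ m') : ℝ≥0∞) := by
                exact_mod_cast hd
            _ ≤ ((C₁:ℝ≥0∞) + 1) * _ := mul_le_mul_left le_self_add _
      _ = A * ∑' x : Fin d → ℤ,
            (∑' m : Fin d → ℤ, if x ∈ atomQ3 d s m then (g (ξ m) : ℝ≥0∞) else 0) ^ p := by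
          simp_rw [hA, ENNReal.mul_rpow_of_nonneg _ _ hp0.le]
          rw [ENNReal.tsum_mul_left]
      _ ≤ (A + B + 1) * _ := mul_le_mul_left (le_self_add.trans le_self_add) _
  · -- second inequality
    calc ∑' x : Fin d → ℤ,
          (∑' m : Fin d → ℤ, if x ∈ atomQ3 d s m then (g (ξ m) : ℝ≥0∞) else 0) ^ p
        ≤ ∑' x : Fin d → ℤ, ((3:ℝ≥0∞) ^ d) ^ p *
            ∑' m : Fin d → ℤ, if x ∈ atomQ3 d s m then ((g (ξ m) : ℝ≥0∞)) ^ p else 0 := by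
          refine ENNReal.tsum_le_tsum fun x => ?_
          rw [hregion x (fun m => (g (ξ m) : ℝ≥0∞)),
            hregion x (fun m => ((g (ξ m) : ℝ≥0∞)) ^ p)]
          have := pow_sum_le
            (Finset.Icc (fun a => x a / 2 ^ (s a) - 1) (fun a => x a / 2 ^ (s a) + 1))
            (fun m => (g (ξ m) : ℝ≥0∞)) hp
          rwa [hcardT x, Nat.cast_pow, Nat.cast_ofNat] at this
      _ = ((3:ℝ≥0∞) ^ d) ^ p *
            ∑' m : Fin d → ℤ, ((atomQ3 d s m).card : ℝ≥0∞) * ((g (ξ m) : ℝ≥0∞)) ^ p := by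
          rw [ENNReal.tsum_mul_left]
          congr 1
          rw [ENNReal.tsum_comm]
          exact tsum_congr fun m => tsum_ind (atomQ3 d s m) _
      _ ≤ ((3:ℝ≥0∞) ^ d) ^ p * ∑' m : Fin d → ℤ,
            ((3:ℝ≥0∞) ^ d * (c₂ : ℝ≥0∞)⁻¹) * ∑ y ∈ atomQ d s m, ((g y : ℝ≥0∞)) ^ p := by
          refine mul_le_mul_right (ENNReal.tsum_le_tsum fun m => ?_) _
          obtain ⟨Xq, hXsub, hXcard, hXinf⟩ := hinf m
          have hc2ne : (c₂ : ℝ≥0∞) ≠ 0 := by exact_mod_cast hc₂.ne'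
          have hX : (c₂:ℝ≥0∞) * ((atomQ d s m).card : ℝ≥0∞) ≤ (Xq.card : ℝ≥0∞) := by
            have := ENNReal.ofReal_le_ofReal hXcard
            rwa [ENNReal.ofReal_mul c₂.coe_nonneg, ENNReal.ofReal_coe_nnreal,
              ENNReal.ofReal_natCast, ENNReal.ofReal_natCast] at this
          have h2 : (Xq.card : ℝ≥0∞) * ((g (ξ m) : ℝ≥0∞)) ^ p
              ≤ ∑ y ∈ Xq, ((g y : ℝ≥0∞)) ^ p := by
            rw [← nsmul_eq_mul]
            exact Finset.card_nsmul_le_sum Xq _ _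
              (fun y hy => ENNReal.rpow_le_rpow (ENNReal.coe_le_coe.mpr (hXinf y hy)) hp0.le)
          have h3 : ∑ y ∈ Xq, ((g y : ℝ≥0∞)) ^ p ≤ ∑ y ∈ atomQ d s m, ((g y : ℝ≥0∞)) ^ p :=
            Finset.sum_le_sum_of_subset hXsub
          have h1 : ((atomQ d s m).card : ℝ≥0∞) * ((g (ξ m) : ℝ≥0∞)) ^ p
              ≤ (c₂ : ℝ≥0∞)⁻¹ * ∑ y ∈ atomQ d s m, ((g y : ℝ≥0∞)) ^ p := by
            calc ((atomQ d s m).card : ℝ≥0∞) * ((g (ξ m) : ℝ≥0∞)) ^ p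
                = (c₂ : ℝ≥0∞)⁻¹ * ((c₂:ℝ≥0∞) * ((atomQ d s m).card : ℝ≥0∞))
                    * ((g (ξ m) : ℝ≥0∞)) ^ p := by
                  rw [← mul_assoc, ENNReal.inv_mul_cancel hc2ne ENNReal.coe_ne_top, one_mul]
              _ ≤ (c₂ : ℝ≥0∞)⁻¹ * (Xq.card : ℝ≥0∞) * ((g (ξ m) : ℝ≥0∞)) ^ p := by gcongr
              _ = (c₂ : ℝ≥0∞)⁻¹ * ((Xq.card : ℝ≥0∞) * ((g (ξ m) : ℝ≥0∞)) ^ p) :=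
                  mul_assoc _ _ _
              _ ≤ _ := mul_le_mul_right (h2.trans h3) _
          calc ((atomQ3 d s m).card : ℝ≥0∞) * ((g (ξ m) : ℝ≥0∞)) ^ p
              = (3:ℝ≥0∞) ^ d * (((atomQ d s m).card : ℝ≥0∞) * ((g (ξ m) : ℝ≥0∞)) ^ p) := by
                rw [card_atomQ3_eq]; push_cast; ring
            _ ≤ (3:ℝ≥0∞) ^ d * ((c₂ : ℝ≥0∞)⁻¹ * ∑ y ∈ atomQ d s m, ((g y : ℝ≥0∞)) ^ p) :=
                mul_le_mul_right h1 _
            _ = ((3:ℝ≥0∞) ^ d * (c₂ : ℝ≥0∞)⁻¹) * ∑ y ∈ atomQ d s m, ((g y : ℝ≥0∞)) ^ p := by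
                ring
      _ = B * ∑' x : Fin d → ℤ, ((g x : ℝ≥0∞)) ^ p := by
          rw [ENNReal.tsum_mul_left, ← tsum_partition (fun y => ((g y : ℝ≥0∞)) ^ p), hB]
          ring
      _ ≤ (A + B + 1) * _ := mul_le_mul_left (le_add_self.trans le_self_add) _
end

section
/- Let $\{\tau_j\}$ be a (reverse) filtration of $\mathbb{Z}^d$ by partitions into dyadic rectangles, with conditional expectation $\mathbb{E}'_j$, maximal operator $\mathcal{M}f = \sup_j |\mathbb{E}'_j f|$, sharp function $\mathcal{M}^\# f(x) = \sup_j \sup_{x \in R \in \tau_j} \inf_a \frac{1}{|R|}\int_R |f - a|$, and enlarged maximal function $M' f(x) = \sup_j \sup_{x \in y + 5H_j'} \frac{1}{|5H_j'|}\int_{y+5H_j'}|f|$. Suppose $g : \mathbb{Z}^d \to [0,\infty)$ is a function of the form $g = \sum_k g_k$ where each $g_k$ is constant on atoms of $\sigma_k$, the 'local part' $\sum_{k \leq k'} g_k$ restricted to any $R \in \tau_j$ (with $j(k') < j \leq j(k'+1)$) depends only on $f \mathbf{1}_{5R}$, and the operator $f \mapsto (\sum_k g_k)^{1/2}$ is bounded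 on $L^2(\mathbb{Z}^d)$. Then $\mathcal{M}^\#(g)(x) \lesssim M'(f^2)(x)$ pointwise. -/
open scoped ENNReal

/-- The atom `R = ∏_a [2^{e a j} m_a, 2^{e a j}(m_a+1))` of the partition `τ_j` of
`ℤ^d` into dyadic rectangles. -/
noncomputable def atomT (d : ℕ) (e : Fin d → ℕ → ℕ) (j : ℕ) (m : Fin d → ℤ) : Finset (Fin d → ℤ) :=
  Finset.Icc (fun a => 2 ^ (e a j) * m a) (fun a => 2 ^ (e a j) * (m a + 1) - 1)

/-- The `5`-fold dilate `5R` of the atom `R`. -/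
noncomputable def atomT5 (d : ℕ) (e : Fin d → ℕ → ℕ) (j : ℕ) (m : Fin d → ℤ) : Finset (Fin d → ℤ) :=
  Finset.Icc (fun a => 2 ^ (e a j) * (m a - 2)) (fun a => 2 ^ (e a j) * (m a + 3) - 1)

/-- A translate `y + 5H_j'` of the `5`-dilated basic rectangle at scale `j`. -/
noncomputable def transl5 (d : ℕ) (e : Fin d → ℕ → ℕ) (j : ℕ) (y : Fin d → ℤ) : Finset (Fin d → ℤ) :=
  Finset.Icc y (fun a => y a + 5 * 2 ^ (e a j) - 1)

/-- The dyadic sharp maximal function associated to the filtration `{τ_j}`. -/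
noncomputable def sharpMax (d : ℕ) (e : Fin d → ℕ → ℕ) (g : (Fin d → ℤ) → ℝ≥0∞)
    (x : Fin d → ℤ) : ℝ≥0∞ :=
  ⨆ (j : ℕ) (m : Fin d → ℤ) (_ : x ∈ atomT d e j m), ⨅ a : ℝ≥0∞,
    ((atomT d e j m).card : ℝ≥0∞)⁻¹ *
      ∑ z ∈ atomT d e j m, ((g z - a) + (a - g z))

/-- The enlarged maximal function `M' h(x) = sup_j sup_{x ∈ y+5H_j'} avg_{y+5H_j'} h`. -/
noncomputable def bigM5 (d : ℕ) (e : Fin d → ℕ → ℕ) (h : (Fin d → ℤ) → ℝ≥0∞)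
    (x : Fin d → ℤ) : ℝ≥0∞ :=
  ⨆ (j : ℕ) (y : Fin d → ℤ) (_ : x ∈ transl5 d e j y),
    ((transl5 d e j y).card : ℝ≥0∞)⁻¹ * ∑ z ∈ transl5 d e j y, h z

lemma tsum_split (f : ℕ → ℝ≥0∞) (n : ℕ) :
    ∑' i, f i = (∑ i ∈ Finset.range n, f i) + ∑' i, f (i + n) := by
  have h := Summable.tsum_add_tsum_compl (f := f) (s := ↑(Finset.range n))
    ENNReal.summable ENNReal.summable
  rw [← h]
  congr 1
  · exact Finset.tsum_subtype (Finset.range n) f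
  · have hE : ∀ p : {x : ℕ // x ∈ (↑(Finset.range n) : Set ℕ)ᶜ}, n ≤ p.1 := by
      intro p; have := p.2; simp at this; omega
    let E : ℕ ≃ {x : ℕ // x ∈ (↑(Finset.range n) : Set ℕ)ᶜ} :=
      ⟨fun i => ⟨i + n, by simp⟩, fun p => p.1 - n, fun i => by simp,
        fun p => Subtype.ext (by simp [Nat.sub_add_cancel (hE p)])⟩
    exact (Equiv.tsum_eq E (fun p => f ↑p)).symm

lemma atom_sub (d : ℕ) (e : Fin d → ℕ → ℕ) (hmono : ∀ a, Monotone (e a))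
    {j j' : ℕ} (hjj : j ≤ j') (m : Fin d → ℤ) :
    ∃ m', atomT d e j m ⊆ atomT d e j' m' := by
  refine ⟨fun a => m a / 2 ^ (e a j' - e a j), fun z hz => ?_⟩
  simp only [atomT, Finset.mem_Icc, Pi.le_def] at hz ⊢
  obtain ⟨h1, h2⟩ := hz
  have key : ∀ a : Fin d, 2 ^ (e a j') * (m a / 2 ^ (e a j' - e a j)) ≤ z a ∧
      z a ≤ 2 ^ (e a j') * (m a / 2 ^ (e a j' - e a j) + 1) - 1 := by
    intro a
    have hle : e a j ≤ e a j' := hmono a hjj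
    set t : ℤ := 2 ^ (e a j' - e a j) with ht
    set q : ℤ := m a / t with hqdef
    have htpos : (0:ℤ) < t := by positivity
    have hEpos : (0:ℤ) < 2 ^ (e a j) := by positivity
    have hsplit : (2:ℤ) ^ (e a j') = 2 ^ (e a j) * t := by
      rw [ht, ← pow_add]; congr 1; omega
    have hq := Int.mul_ediv_add_emod (m a) t
    have hr0 : 0 ≤ m a % t := Int.emod_nonneg _ (ne_of_gt htpos)
    have hrt : m a % t < t := Int.emod_lt_of_pos _ htpos
    constructor
    · have h3 : t * q ≤ m a := by linarith
      calc (2:ℤ) ^ (e a j') * q = 2 ^ (e a j) * (t * q) := by rw [hsplit]; ring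
        _ ≤ 2 ^ (e a j) * m a := by exact mul_le_mul_of_nonneg_left h3 hEpos.le
        _ ≤ z a := h1 a
    · have h4 : t * (q + 1) = t * q + t := by ring
      have h5 : m a + 1 ≤ t * (q + 1) := by linarith
      calc z a ≤ 2 ^ (e a j) * (m a + 1) - 1 := h2 a
        _ ≤ 2 ^ (e a j) * (t * (q + 1)) - 1 := by
            have := mul_le_mul_of_nonneg_left h5 hEpos.le; linarith
        _ = 2 ^ (e a j') * (q + 1) - 1 := by rw [hsplit]; ring
  exact ⟨fun a => (key a).1, fun a => (key a).2⟩

lemma card_atomT (d : ℕ) (e : Fin d → ℕ → ℕ) (j : ℕ) (m : Fin d → ℤ) :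
    (atomT d e j m).card = ∏ a, 2 ^ (e a j) := by
  rw [atomT, Pi.card_Icc]
  refine Finset.prod_congr rfl fun a _ => ?_
  rw [Int.card_Icc]
  have h : (2:ℤ) ^ (e a j) * (m a + 1) - 1 + 1 - 2 ^ (e a j) * m a = ((2 ^ (e a j) : ℕ) : ℤ) := by
    push_cast; ring
  rw [h, Int.toNat_natCast]

lemma card_atomT5 (d : ℕ) (e : Fin d → ℕ → ℕ) (j : ℕ) (m : Fin d → ℤ) :
    (atomT5 d e j m).card = 5 ^ d * ∏ a, 2 ^ (e a j) := by
  rw [atomT5, Pi.card_Icc]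
  have h : ∀ a : Fin d, (Finset.Icc (2 ^ (e a j) * (m a - 2)) (2 ^ (e a j) * (m a + 3) - 1)).card
      = 5 * 2 ^ (e a j) := by
    intro a
    rw [Int.card_Icc]
    have h2 : (2:ℤ) ^ (e a j) * (m a + 3) - 1 + 1 - 2 ^ (e a j) * (m a - 2)
        = ((5 * 2 ^ (e a j) : ℕ) : ℤ) := by push_cast; ring
    rw [h2, Int.toNat_natCast]
  rw [Finset.prod_congr rfl fun a _ => h a, Finset.prod_mul_distrib, Finset.prod_const,
    Finset.card_univ, Fintype.card_fin]

/-- Sharp function bound for the (square of the) discretized square function: if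
`g = ∑_k S f k` with `S f k` constant on atoms of `σ_k = τ_{j(k)}`, the local part
depending only on `f 1_{5R}`, and `f ↦ ∑_k S f k` bounded `L^2 → L^1`-square style,
then `M^♯(g) ≲ M'(f²)` pointwise. -/
theorem stmt_10 (d : ℕ) (e : Fin d → ℕ → ℕ) (hmono : ∀ a, Monotone (e a))
    (jk : ℕ → ℕ) (hjk : StrictMono jk)
    (S : ((Fin d → ℤ) → ℝ) → ℕ → (Fin d → ℤ) → ℝ≥0∞)
    (C : ℝ≥0∞) (hC : C ≠ ⊤)
    (hconst : ∀ f k m, ∀ x ∈ atomT d e (jk k) m, ∀ y ∈ atomT d e (jk k) m,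
      S f k x = S f k y)
    (hlocal : ∀ (j k' : ℕ), jk k' < j → j ≤ jk (k' + 1) → ∀ m (f₁ f₂ : (Fin d → ℤ) → ℝ),
      (∀ x ∈ atomT5 d e j m, f₁ x = f₂ x) →
      ∀ x ∈ atomT d e j m, ∀ k ≤ k', S f₁ k x = S f₂ k x)
    (hL2 : ∀ f : (Fin d → ℤ) → ℝ,
      (∑' x : Fin d → ℤ, ∑' k : ℕ, S f k x) ≤
        C * ∑' x : Fin d → ℤ, ENNReal.ofReal (f x ^ 2)) :
    ∃ C' : ℝ≥0∞, C' ≠ ⊤ ∧ ∀ (f : (Fin d → ℤ) → ℝ) (x : Fin d → ℤ),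
      sharpMax d e (fun z => ∑' k : ℕ, S f k z) x ≤
        C' * bigM5 d e (fun z => ENNReal.ofReal (f z ^ 2)) x := by
  refine ⟨5 ^ d * C, ENNReal.mul_ne_top (by simp) hC, ?_⟩
  intro f x
  refine iSup_le fun j => iSup_le fun m => iSup_le fun hx => ?_
  have hSconst : ∀ k, j ≤ jk k → ∀ z ∈ atomT d e j m, S f k z = S f k x := by
    intro k hk z hz
    obtain ⟨m', hsub⟩ := atom_sub d e hmono hk m
    exact hconst f k m' z (hsub hz) x (hsub hx)
  by_cases hj : j ≤ jk 0
  · -- all terms constant on R: take a = g x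
    have hgconst : ∀ z ∈ atomT d e j m, (∑' k, S f k z) = ∑' k, S f k x :=
      fun z hz => tsum_congr fun k => hSconst k (hj.trans (hjk.monotone (Nat.zero_le k))) z hz
    refine le_trans (iInf_le _ (∑' k, S f k x)) ?_
    have hz0 : ∑ z ∈ atomT d e j m,
        (((∑' k, S f k z) - ∑' k, S f k x) + ((∑' k, S f k x) - ∑' k, S f k z)) = 0 :=
      Finset.sum_eq_zero fun z hz => by rw [hgconst z hz, tsub_self, add_zero]
    rw [hz0, mul_zero]
    exact zero_le
  · push_neg at hj
    set k' := Nat.findGreatest (fun k => jk k < j) j with hk'def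
    have h1 : jk k' < j := by
      rw [hk'def]
      exact Nat.findGreatest_spec (P := fun k => jk k < j) (m := 0) (Nat.zero_le j) hj
    have h2 : j ≤ jk (k' + 1) := by
      by_contra h
      push_neg at h
      have hb : k' + 1 ≤ j := le_trans hjk.le_apply h.le
      refine Nat.findGreatest_is_greatest (P := fun k => jk k < j) (n := j) ?_ hb h
      rw [← hk'def]
      exact Nat.lt_succ_self k'
    set f₂ : (Fin d → ℤ) → ℝ := fun z => if z ∈ atomT5 d e j m then f z else 0 with hf₂
    set a₀ : ℝ≥0∞ := ∑' i, S f (i + (k' + 1)) x with ha₀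
    have htail : ∀ z ∈ atomT d e j m, ∀ i : ℕ, S f (i + (k' + 1)) z = S f (i + (k' + 1)) x :=
      fun z hz i => hSconst (i + (k' + 1)) (h2.trans (hjk.monotone (Nat.le_add_left _ i))) z hz
    have hgz : ∀ z ∈ atomT d e j m,
        (∑' k, S f k z) = (∑ k ∈ Finset.range (k' + 1), S f k z) + a₀ := by
      intro z hz
      rw [tsum_split (fun k => S f k z) (k' + 1)]
      congr 1
      exact tsum_congr fun i => htail z hz i
    have habs : ∀ z ∈ atomT d e j m,
        ((∑' k, S f k z) - a₀) + (a₀ - ∑' k, S f k z)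
          ≤ ∑ k ∈ Finset.range (k' + 1), S f k z := by
      intro z hz
      rw [hgz z hz, tsub_eq_zero_of_le le_add_self, add_zero]
      exact tsub_le_iff_right.mpr le_rfl
    have hloc : ∀ z ∈ atomT d e j m, ∀ k ∈ Finset.range (k' + 1), S f k z = S f₂ k z := by
      intro z hz k hk
      exact hlocal j k' h1 h2 m f f₂ (fun w hw => by simp [hf₂, hw]) z hz k
        (Nat.lt_succ_iff.mp (Finset.mem_range.mp hk))
    have hsum : ∑ z ∈ atomT d e j m, ∑ k ∈ Finset.range (k' + 1), S f k z
        ≤ C * ∑ z ∈ atomT5 d e j m, ENNReal.ofReal (f z ^ 2) := by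
      calc ∑ z ∈ atomT d e j m, ∑ k ∈ Finset.range (k' + 1), S f k z
          = ∑ z ∈ atomT d e j m, ∑ k ∈ Finset.range (k' + 1), S f₂ k z :=
            Finset.sum_congr rfl fun z hz => Finset.sum_congr rfl fun k hk => hloc z hz k hk
        _ ≤ ∑ z ∈ atomT d e j m, ∑' k, S f₂ k z :=
            Finset.sum_le_sum fun z _ => ENNReal.sum_le_tsum _
        _ ≤ ∑' z, ∑' k, S f₂ k z := ENNReal.sum_le_tsum _
        _ ≤ C * ∑' z, ENNReal.ofReal (f₂ z ^ 2) := hL2 f₂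
        _ = C * ∑ z ∈ atomT5 d e j m, ENNReal.ofReal (f z ^ 2) := by
            congr 1
            rw [tsum_eq_sum (s := atomT5 d e j m) (fun z hz => by simp [hf₂, hz])]
            exact Finset.sum_congr rfl fun z hz => by simp [hf₂, hz]
    -- cardinalities
    have hN0 : ((∏ a, 2 ^ (e a j) : ℕ) : ℝ≥0∞) ≠ 0 := by
      simp only [ne_eq, Nat.cast_eq_zero]
      exact Finset.prod_ne_zero_iff.mpr fun a _ => by positivity
    have hNtop : ((∏ a, 2 ^ (e a j) : ℕ) : ℝ≥0∞) ≠ ⊤ := ENNReal.natCast_ne_top _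
    have h5d0 : ((5 : ℝ≥0∞) ^ d) ≠ 0 := by positivity
    have h5dtop : ((5 : ℝ≥0∞) ^ d) ≠ ⊤ := by simp
    have hNinv : ((atomT d e j m).card : ℝ≥0∞)⁻¹
        = 5 ^ d * ((atomT5 d e j m).card : ℝ≥0∞)⁻¹ := by
      rw [card_atomT, card_atomT5]
      push_cast
      rw [ENNReal.mul_inv (Or.inl h5d0) (Or.inl h5dtop), ← mul_assoc,
        ENNReal.mul_inv_cancel h5d0 h5dtop, one_mul]
    -- membership of x in the dilated atom
    have hx5 : x ∈ atomT5 d e j m := by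
      simp only [atomT, atomT5, Finset.mem_Icc, Pi.le_def] at hx ⊢
      have hp : ∀ a : Fin d, (0:ℤ) < 2 ^ (e a j) := fun a => by positivity
      exact ⟨fun a => by nlinarith [hx.1 a, hp a], fun a => by nlinarith [hx.2 a, hp a]⟩
    have hEq : transl5 d e j (fun a => 2 ^ (e a j) * (m a - 2)) = atomT5 d e j m := by
      unfold transl5 atomT5
      congr 1
      funext a; ring
    have hbig : ((atomT5 d e j m).card : ℝ≥0∞)⁻¹ * ∑ z ∈ atomT5 d e j m, ENNReal.ofReal (f z ^ 2)
        ≤ bigM5 d e (fun z => ENNReal.ofReal (f z ^ 2)) x := by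
      rw [← hEq]
      refine le_iSup_of_le j (le_iSup_of_le (fun a => 2 ^ (e a j) * (m a - 2)) ?_)
      rw [hEq]
      exact le_iSup_of_le hx5 le_rfl
    refine le_trans (iInf_le _ a₀) ?_
    calc ((atomT d e j m).card : ℝ≥0∞)⁻¹ * ∑ z ∈ atomT d e j m,
          (((∑' k, S f k z) - a₀) + (a₀ - ∑' k, S f k z))
        ≤ ((atomT d e j m).card : ℝ≥0∞)⁻¹ *
          (C * ∑ z ∈ atomT5 d e j m, ENNReal.ofReal (f z ^ 2)) :=
          mul_le_mul_right ((Finset.sum_le_sum habs).trans hsum) _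
      _ = (5 ^ d * C) * (((atomT5 d e j m).card : ℝ≥0∞)⁻¹ *
          ∑ z ∈ atomT5 d e j m, ENNReal.ofReal (f z ^ 2)) := by
          rw [hNinv]; ring
      _ ≤ (5 ^ d * C) * bigM5 d e (fun z => ENNReal.ofReal (f z ^ 2)) x :=
          mul_le_mul_right hbig _
end

section
/- Let $\mathcal{A} = \{E_t\}$ be a family of finite sets in $\mathbb{Z}^d$ with $E_t \subset H_k$ and $c|H_k| \leq |E_t|$ whenever $2^k \leq t < 2^{k+1}$, where $H_k$ are symmetric dyadic rectangles and $E_t \subset E_{t'}$ for $2^k \leq t \leq t' < 2^{k+1}$. Define $A_t f := \chi_{E_t} * f$ with $\chi_{E} = \frac{1}{|E|}\mathbf{1}_E$. Then the short square function over scale $k$ satisfies the pointwise bound $\mathfrak{s}_k^S f(x) := \sup_{t_i \text{ increasing}} \big(\sum_{2^k \leq t_i < 2^{k+1}} |(A_{t_i} - A_{t_{i+1}})f(x)|^2\big)^{1/2} \leq C(c,d)\, \chi_{H_k} * |f|(x)$. -/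
/-- The symmetric dyadic rectangle `H_k = ∏_a [-2^{e a}, 2^{e a})` as a finset. -/
noncomputable def HrectF (d : ℕ) (e : Fin d → ℕ) : Finset (Fin d → ℤ) :=
  Finset.Icc (fun a => -(2 ^ (e a) : ℤ)) (fun a => (2 ^ (e a) : ℤ) - 1)

lemma sum_sq_le_sq_sum (s : Finset ℕ) (b : ℕ → ℝ) (hb : ∀ i ∈ s, 0 ≤ b i) :
    ∑ i ∈ s, (b i) ^ 2 ≤ (∑ i ∈ s, b i) ^ 2 := by
  rw [sq (∑ i ∈ s, b i), Finset.sum_mul]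
  refine Finset.sum_le_sum fun i hi => ?_
  rw [sq]
  exact mul_le_mul_of_nonneg_left
    (Finset.single_le_sum hb hi) (hb i hi)

/-- Pointwise bound for the short square function at scale `k`: for a nested family
`E_t ⊂ H_k` with `c|H_k| ≤ |E_t|` for `2^k ≤ t < 2^{k+1}`, any increasing selection of
times satisfies `(∑_i |(A_{t_i} - A_{t_{i+1}})f(x)|²)^{1/2} ≤ C(c,d) χ_{H_k} * |f|(x)`. -/
theorem stmt_16 (d : ℕ) (c : ℝ) (hc : 0 < c) :
    ∃ C : ℝ, 0 < C ∧
      ∀ (k : ℕ) (e : Fin d → ℕ) (E : ℕ → Finset (Fin d → ℤ)),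
        (∀ t, 2 ^ k ≤ t → t < 2 ^ (k + 1) →
          E t ⊆ HrectF d e ∧ (E t).Nonempty ∧ c * (HrectF d e).card ≤ (E t).card) →
        (∀ t t', 2 ^ k ≤ t → t ≤ t' → t' < 2 ^ (k + 1) → E t ⊆ E t') →
        ∀ (f : (Fin d → ℤ) → ℝ) (x : Fin d → ℤ) (N : ℕ) (t : ℕ → ℕ),
          StrictMono t → (∀ i ≤ N, 2 ^ k ≤ t i ∧ t i < 2 ^ (k + 1)) →
          Real.sqrt (∑ i ∈ Finset.range N,
              (((E (t i)).card : ℝ)⁻¹ * (∑ y ∈ E (t i), f (x - y))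
                - ((E (t (i + 1))).card : ℝ)⁻¹ * (∑ y ∈ E (t (i + 1)), f (x - y))) ^ 2)
            ≤ C * (((HrectF d e).card : ℝ)⁻¹ * ∑ y ∈ HrectF d e, |f (x - y)|) := by
  refine ⟨2 / c, by positivity, ?_⟩
  intro k e E hE hnest f x N t ht hti
  set H := HrectF d e with hHdef
  have hHne : H.Nonempty := by
    refine Finset.nonempty_Icc.mpr fun a => ?_
    have h : (0:ℤ) < 2 ^ (e a) := pow_pos two_pos _
    show -(2 ^ (e a) : ℤ) ≤ (2 ^ (e a) : ℤ) - 1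
    omega
  have hHpos : (0:ℝ) < H.card := by exact_mod_cast Finset.card_pos.mpr hHne
  set g : (Fin d → ℤ) → ℝ := fun y => |f (x - y)| with hgdef
  set S := ∑ y ∈ H, g y with hSdef
  have hg : ∀ y, 0 ≤ g y := fun y => abs_nonneg _
  have hS0 : 0 ≤ S := Finset.sum_nonneg fun y _ => hg y
  set u : ℕ → ℝ := fun i => ((E (t i)).card : ℝ)⁻¹ with hudef
  set v : ℕ → ℝ := fun i => ∑ y ∈ E (t i), g y with hvdef
  have hEi : ∀ i ≤ N, E (t i) ⊆ H ∧ (E (t i)).Nonempty ∧ c * H.card ≤ (E (t i)).card :=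
    fun i hi => hE (t i) (hti i hi).1 (hti i hi).2
  have hcard : ∀ i ≤ N, (0:ℝ) < (E (t i)).card := fun i hi => by
    exact_mod_cast Finset.card_pos.mpr (hEi i hi).2.1
  have hsub : ∀ i < N, E (t i) ⊆ E (t (i + 1)) := fun i hi =>
    hnest _ _ (hti i (le_of_lt hi)).1 (ht.monotone (Nat.le_succ i))
      (hti (i + 1) hi).2
  have huC : ∀ i ≤ N, u i ≤ (c * H.card)⁻¹ := fun i hi => by
    have h1 := (hEi i hi).2.2
    have h2 := hcard i hi
    have h3 : (0:ℝ) < c * H.card := by positivity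
    exact inv_anti₀ h3 h1
  have hvS : ∀ i ≤ N, v i ≤ S := fun i hi =>
    Finset.sum_le_sum_of_subset_of_nonneg (hEi i hi).1 fun y _ _ => hg y
  have hv0 : ∀ i, 0 ≤ v i := fun i => Finset.sum_nonneg fun y _ => hg y
  set a : ℕ → ℝ := fun i =>
    ((E (t i)).card : ℝ)⁻¹ * (∑ y ∈ E (t i), f (x - y))
      - ((E (t (i + 1))).card : ℝ)⁻¹ * (∑ y ∈ E (t (i + 1)), f (x - y)) with hadef
  -- key per-term bound
  have key : ∀ i < N, |a i| ≤ (u i - u (i + 1)) * S + (c * H.card)⁻¹ * (v (i + 1) - v i) := by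
    intro i hi
    have hiN : i ≤ N := hi.le
    have hi1N : i + 1 ≤ N := hi
    have hΔ : ∑ y ∈ E (t (i+1)) \ E (t i), f (x - y) + ∑ y ∈ E (t i), f (x - y)
        = ∑ y ∈ E (t (i+1)), f (x - y) := Finset.sum_sdiff (hsub i hi)
    have ha : a i = (u i - u (i+1)) * (∑ y ∈ E (t i), f (x - y))
        - u (i+1) * (∑ y ∈ E (t (i+1)) \ E (t i), f (x - y)) := by
      rw [hadef]; dsimp only; rw [← hΔ]; ring
    have h1 : |∑ y ∈ E (t i), f (x - y)| ≤ v i :=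
      (Finset.abs_sum_le_sum_abs _ _).trans (le_of_eq rfl)
    have h2 : |∑ y ∈ E (t (i+1)) \ E (t i), f (x - y)| ≤ v (i+1) - v i := by
      have := Finset.abs_sum_le_sum_abs (fun y => f (x - y)) (E (t (i+1)) \ E (t i))
      have heq : ∑ y ∈ E (t (i+1)) \ E (t i), g y = v (i+1) - v i := by
        rw [hvdef]; dsimp only
        rw [eq_sub_iff_add_eq]
        exact Finset.sum_sdiff (hsub i hi)
      exact this.trans heq.le
    have humono : 0 ≤ u i - u (i+1) := by
      have hle : ((E (t i)).card : ℝ) ≤ (E (t (i+1))).card := by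
        exact_mod_cast Finset.card_le_card (hsub i hi)
      have := inv_anti₀ (hcard i hiN) hle
      linarith
    have hu1 : 0 ≤ u (i+1) := (inv_nonneg).mpr (hcard (i+1) hi1N).le
    calc |a i| ≤ |(u i - u (i+1)) * (∑ y ∈ E (t i), f (x - y))|
            + |u (i+1) * (∑ y ∈ E (t (i+1)) \ E (t i), f (x - y))| := by
          rw [ha]; exact abs_sub _ _
      _ = (u i - u (i+1)) * |∑ y ∈ E (t i), f (x - y)|
            + u (i+1) * |∑ y ∈ E (t (i+1)) \ E (t i), f (x - y)| := by
          rw [abs_mul, abs_mul, abs_of_nonneg humono, abs_of_nonneg hu1]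
      _ ≤ (u i - u (i+1)) * S + (c * H.card)⁻¹ * (v (i+1) - v i) := by
          have hviS : |∑ y ∈ E (t i), f (x - y)| ≤ S := h1.trans (hvS i hiN)
          have habs0 : (0:ℝ) ≤ |∑ y ∈ E (t (i+1)) \ E (t i), f (x - y)| := abs_nonneg _
          gcongr
          exact huC (i+1) hi1N
  -- sqrt of sum of squares ≤ sum of abs values
  have step1 : Real.sqrt (∑ i ∈ Finset.range N, (a i) ^ 2)
      ≤ ∑ i ∈ Finset.range N, |a i| := by
    have h1 : ∑ i ∈ Finset.range N, (a i) ^ 2 ≤ (∑ i ∈ Finset.range N, |a i|) ^ 2 := by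
      have := sum_sq_le_sq_sum (Finset.range N) (fun i => |a i|) (fun i _ => abs_nonneg _)
      simpa [sq_abs] using this
    calc Real.sqrt (∑ i ∈ Finset.range N, (a i) ^ 2)
        ≤ Real.sqrt ((∑ i ∈ Finset.range N, |a i|) ^ 2) := Real.sqrt_le_sqrt h1
      _ = ∑ i ∈ Finset.range N, |a i| :=
          Real.sqrt_sq (Finset.sum_nonneg fun i _ => abs_nonneg _)
  have step2 : ∑ i ∈ Finset.range N, |a i|
      ≤ (u 0 - u N) * S + (c * H.card)⁻¹ * (v N - v 0) := by
    calc ∑ i ∈ Finset.range N, |a i|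
        ≤ ∑ i ∈ Finset.range N,
            ((u i - u (i + 1)) * S + (c * H.card)⁻¹ * (v (i + 1) - v i)) :=
          Finset.sum_le_sum fun i hi => key i (Finset.mem_range.mp hi)
      _ = (∑ i ∈ Finset.range N, (u i - u (i + 1))) * S
           + (c * H.card)⁻¹ * (∑ i ∈ Finset.range N, (v (i + 1) - v i)) := by
          rw [Finset.sum_add_distrib, Finset.sum_mul, Finset.mul_sum]
      _ = (u 0 - u N) * S + (c * H.card)⁻¹ * (v N - v 0) := by
          rw [Finset.sum_range_sub' u, Finset.sum_range_sub v]
  have final : (u 0 - u N) * S + (c * H.card)⁻¹ * (v N - v 0)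
      ≤ 2 / c * ((H.card : ℝ)⁻¹ * S) := by
    have h1 : u 0 ≤ (c * H.card)⁻¹ := huC 0 (Nat.zero_le N)
    have h2 : 0 ≤ u N := (inv_nonneg).mpr (hcard N le_rfl).le
    have h3 : v N ≤ S := hvS N le_rfl
    have h4 : 0 ≤ v 0 := hv0 0
    have hcH : (0:ℝ) < (c * H.card)⁻¹ := by positivity
    have heq : 2 / c * ((H.card : ℝ)⁻¹ * S) = (c * H.card)⁻¹ * S + (c * H.card)⁻¹ * S := by
      field_simp; ring
    rw [heq]
    nlinarith [mul_le_mul_of_nonneg_right h1 hS0, mul_le_mul_of_nonneg_right h2 hS0]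
  have := (step1.trans step2).trans final
  simpa [hadef, hgdef, hSdef, hHdef] using this
end
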